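/- arXiv:1803.03924 — 2 statements merged into one kernel-verified Lean document; each statement's English description precedes it below -/
import Mathlib

section
/- (Main Theorem: representation of the Jacobi identity.) Assume ∇ ∘ j = 0, ev_ψ(j^a_{iα}) = 0 for every ψ ∈ Ē := ker ∇ and all a, i, α, and Λ is skew-adjoint (Λ* = −Λ as maps on finitely supported families). For R ∈ F set δR = j*(∂R), φ(R) = j(Λ(δR)), and {K,L} := ⟨δK, Λ(δL)⟩ ∈ F. Then for all K, L, M ∈ F: (⟨δK, Λ(δ{L,M})⟩ + ⟨δL, Λ(δ{M,K})⟩ + ⟨δM, Λ(δ{K,L})⟩) − (⟨δK, [ev_{φ(L)},Λ](δM)⟩ + ⟨δL, [ev_{φ(M)},Λ](δK)⟩ + ⟨δM, [ev_{φ(K)},Λ](δL)⟩) ∈ Div F^M, where [ev_ψ, Λ] denotes the operator with coefficients ev_ψ(Λ^{αβ}_i), i.e. ([ev_ψ,Λ]f)^α = Σ_{β,i} ev_ψ(Λ^{αβ}_i)·D^i f_β. -/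
noncomputable section

variable {𝔽 : Type*} [Field 𝔽] {F : Type*} [CommRing F] [Algebra 𝔽 F] {m : ℕ}
  {A A' : Type*}

/-- Membership in the space of divergences `Div F^M = {Σ_μ D_μ ψ^μ}`. -/
def IsDiv (D : Fin m → Derivation 𝔽 F F) (f : F) : Prop :=
  ∃ ψ : Fin m → F, f = ∑ μ, D μ (ψ μ)

/-- The evolutionary differentiation `ev_φ f = Σ_a φ^a · ∂_a f` (a finite sum). -/
def ev (pa : A → Derivation 𝔽 F F) (φ : A → F) (f : F) : F :=
  ∑ᶠ a, φ a * pa a f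

/-- `(∇φ)^a_μ = D_μ φ^a + Σ_b Γ^a_{μb} · φ^b`; here `Γ b μ a` denotes `Γ^b_{μa}`. -/
def nabla (D : Fin m → Derivation 𝔽 F F) (Γ : A → Fin m → A → F)
    (φ : A → F) (a : A) (μ : Fin m) : F :=
  D μ (φ a) + ∑ᶠ b, Γ a μ b * φ b

/-- `(∇*χ)_a = -Σ_μ D_μ χ^μ_a + Σ_{μ,b} Γ^b_{μa} · χ^μ_b`. -/
def nablaStar (D : Fin m → Derivation 𝔽 F F) (Γ : A → Fin m → A → F)
    (χ : Fin m → A → F) (a : A) : F :=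
  -∑ μ, D μ (χ μ a) + ∑ᶠ b, ∑ μ, Γ b μ a * χ μ b

/-- The pairing `⟨f, φ⟩ = Σ_a f_a · φ^a`. -/
def pair (f φ : A → F) : F := ∑ᶠ a, f a * φ a

/-- `D^i = D_1^{i^1} ∘ ⋯ ∘ D_m^{i^m}`. -/
def Dpow (D : Fin m → Derivation 𝔽 F F) (i : Fin m → ℕ) : F → F :=
  (List.finRange m).foldr (fun μ g => (⇑(D μ))^[i μ] ∘ g) id

/-- `|i| = i^1 + ⋯ + i^m`. -/
def msize {m : ℕ} (i : Fin m → ℕ) : ℕ := ∑ μ, i μ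

/-- The differential operator `P(D)L = Σ_i P_i · D^i L`. -/
def applyP (D : Fin m → Derivation 𝔽 F F) (P : (Fin m → ℕ) → F) (L : F) : F :=
  ∑ᶠ i, P i * Dpow D i L

/-- The Lagrange dual operator `P*(D)K = Σ_i (-1)^{|i|} D^i (P_i · K)`. -/
def applyPstar (D : Fin m → Derivation 𝔽 F F) (P : (Fin m → ℕ) → F) (K : F) : F :=
  ∑ᶠ i, (-1 : F) ^ msize i * Dpow D i (P i * K)

/-- The jet map `(jφ)^a = Σ_{i,α} j^a_{iα} · D^i φ^α`; here `jc a i α` denotes `j^a_{iα}`. -/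
def jmap (D : Fin m → Derivation 𝔽 F F) (jc : A → (Fin m → ℕ) → A' → F)
    (φ : A' → F) (a : A) : F :=
  ∑ᶠ i, ∑ᶠ α, jc a i α * Dpow D i (φ α)

/-- The Lagrange dual `(j*f)_α = Σ_{a,i} (-1)^{|i|} D^i (j^a_{iα} · f_a)`. -/
def jstar (D : Fin m → Derivation 𝔽 F F) (jc : A → (Fin m → ℕ) → A' → F)
    (f : A → F) (α : A') : F :=
  ∑ᶠ a, ∑ᶠ i, (-1 : F) ^ msize i * Dpow D i (jc a i α * f a)

/-- `(Λf)^α = Σ_{β,i} Λ^{αβ}_i · D^i f_β`; here `Λc α β i` denotes `Λ^{αβ}_i`. -/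
def Lam (D : Fin m → Derivation 𝔽 F F) (Λc : A' → A' → (Fin m → ℕ) → F)
    (f : A' → F) (α : A') : F :=
  ∑ᶠ β, ∑ᶠ i, Λc α β i * Dpow D i (f β)

/-- The Lagrange dual `(Λ*f)^α = Σ_{β,i} (-1)^{|i|} D^i (Λ^{βα}_i · f_β)`. -/
def LamStar (D : Fin m → Derivation 𝔽 F F) (Λc : A' → A' → (Fin m → ℕ) → F)
    (f : A' → F) (α : A') : F :=
  ∑ᶠ β, ∑ᶠ i, (-1 : F) ^ msize i * Dpow D i (Λc β α i * f β)

/-- The variational derivative `δR = j*(∂R)`, where `∂R = (∂_a R)`. -/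
def vard (D : Fin m → Derivation 𝔽 F F) (pa : A → Derivation 𝔽 F F)
    (jc : A → (Fin m → ℕ) → A' → F) (R : F) : A' → F :=
  jstar D jc (fun a => pa a R)

/-- The Hamiltonian vector `φ(R) = j(Λ(δR))`. -/
def hamv (D : Fin m → Derivation 𝔽 F F) (pa : A → Derivation 𝔽 F F)
    (jc : A → (Fin m → ℕ) → A' → F) (Λc : A' → A' → (Fin m → ℕ) → F) (R : F) : A → F :=
  jmap D jc (Lam D Λc (vard D pa jc R))

/-- The commutator `[ev_ψ, Λ]`, acting with coefficients `ev_ψ(Λ^{αβ}_i)`. -/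
def evLam (D : Fin m → Derivation 𝔽 F F) (pa : A → Derivation 𝔽 F F)
    (Λc : A' → A' → (Fin m → ℕ) → F) (ψ : A → F) (f : A' → F) (α : A') : F :=
  ∑ᶠ β, ∑ᶠ i, ev pa ψ (Λc α β i) * Dpow D i (f β)

section Infra
variable {𝔽 : Type*} [Field 𝔽] {F : Type*} [CommRing F] [Algebra 𝔽 F] {m : ℕ}
  {A A' : Type*}

lemma isDiv_zero (D : Fin m → Derivation 𝔽 F F) : IsDiv D 0 :=
  ⟨0, by simp⟩

lemma IsDiv.add {D : Fin m → Derivation 𝔽 F F} {f g : F} (hf : IsDiv D f) (hg : IsDiv D g) :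
    IsDiv D (f + g) := by
  obtain ⟨ψ, hψ⟩ := hf; obtain ⟨χ, hχ⟩ := hg
  exact ⟨ψ + χ, by simp [hψ, hχ, Finset.sum_add_distrib]⟩

lemma IsDiv.neg {D : Fin m → Derivation 𝔽 F F} {f : F} (hf : IsDiv D f) : IsDiv D (-f) := by
  obtain ⟨ψ, hψ⟩ := hf
  exact ⟨-ψ, by simp [hψ]⟩

lemma IsDiv.sub {D : Fin m → Derivation 𝔽 F F} {f g : F} (hf : IsDiv D f) (hg : IsDiv D g) :
    IsDiv D (f - g) := by
  simpa [sub_eq_add_neg] using hf.add hg.neg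

lemma isDiv_applyD {D : Fin m → Derivation 𝔽 F F} (μ : Fin m) (x : F) : IsDiv D (D μ x) := by
  refine ⟨fun ν => if ν = μ then x else 0, ?_⟩
  rw [Finset.sum_eq_single μ]
  · simp
  · intro ν _ hν; simp [hν]
  · intro h; exact absurd (Finset.mem_univ μ) h

lemma isDiv_sum {D : Fin m → Derivation 𝔽 F F} {ι : Type*} (s : Finset ι) (f : ι → F)
    (h : ∀ x ∈ s, IsDiv D (f x)) : IsDiv D (∑ x ∈ s, f x) := by
  classical
  induction s using Finset.induction_on with
  | empty => simpa using isDiv_zero D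
  | insert a s hx ih =>
    rw [Finset.sum_insert hx]
    exact (h a (Finset.mem_insert_self a s)).add (ih fun x hxs => h x (Finset.mem_insert_of_mem hxs))

lemma IsDiv.neg_one_pow_mul {D : Fin m → Derivation 𝔽 F F} {f : F} (n : ℕ) (hf : IsDiv D f) :
    IsDiv D ((-1 : F) ^ n * f) := by
  rcases Nat.even_or_odd n with h | h
  · rw [h.neg_one_pow, one_mul]; exact hf
  · rw [h.neg_one_pow, neg_one_mul]; exact hf.neg

end Infra
section DpowSec
variable {𝔽 : Type*} [Field 𝔽] {F : Type*} [CommRing F] [Algebra 𝔽 F] {m : ℕ}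
variable (D : Fin m → Derivation 𝔽 F F)

def Dl (i : Fin m → ℕ) (l : List (Fin m)) : F → F :=
  l.foldr (fun μ g => (⇑(D μ))^[i μ] ∘ g) id

lemma Dpow_eq_Dl (i : Fin m → ℕ) : Dpow D i = Dl D i (List.finRange m) := rfl

lemma iter_add (μ : Fin m) (n : ℕ) (f g : F) :
    (⇑(D μ))^[n] (f + g) = (⇑(D μ))^[n] f + (⇑(D μ))^[n] g := by
  induction n with
  | zero => simp
  | succ n ih => simp [Function.iterate_succ_apply', ih]

lemma iter_zero (μ : Fin m) (n : ℕ) : (⇑(D μ))^[n] (0 : F) = 0 := by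
  induction n with
  | zero => simp
  | succ n ih => simp [Function.iterate_succ_apply', ih]

lemma Dl_add (i : Fin m → ℕ) (l : List (Fin m)) (f g : F) :
    Dl D i l (f + g) = Dl D i l f + Dl D i l g := by
  induction l with
  | nil => rfl
  | cons μ t ih => simp only [Dl, List.foldr_cons, Function.comp_apply] at ih ⊢; rw [ih, iter_add]

lemma Dl_zero (i : Fin m → ℕ) (l : List (Fin m)) : Dl D i l (0 : F) = 0 := by
  induction l with
  | nil => rfl
  | cons μ t ih => simp only [Dl, List.foldr_cons, Function.comp_apply] at ih ⊢; rw [ih, iter_zero]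

variable (hDcomm : ∀ μ ν (f : F), D μ (D ν f) = D ν (D μ f))
include hDcomm

lemma iter_comm (μ ν : Fin m) (n : ℕ) (f : F) :
    (⇑(D μ))^[n] (D ν f) = D ν ((⇑(D μ))^[n] f) := by
  induction n with
  | zero => simp
  | succ n ih => simp [Function.iterate_succ_apply', ih, hDcomm]

lemma Dl_comm (i : Fin m → ℕ) (l : List (Fin m)) (ν : Fin m) (f : F) :
    Dl D i l (D ν f) = D ν (Dl D i l f) := by
  induction l with
  | nil => rfl
  | cons μ t ih =>
    simp only [Dl, List.foldr_cons, Function.comp_apply] at ih ⊢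
    rw [ih, iter_comm D hDcomm]

omit hDcomm

lemma Dl_congr {i j : Fin m → ℕ} (l : List (Fin m)) (h : ∀ μ ∈ l, i μ = j μ) (f : F) :
    Dl D i l f = Dl D j l f := by
  induction l generalizing f with
  | nil => rfl
  | cons μ t ih =>
    simp only [Dl, List.foldr_cons, Function.comp_apply] at ih ⊢
    rw [ih (fun ν hν => h ν (List.mem_cons_of_mem _ hν)), h μ List.mem_cons_self]

include hDcomm

lemma Dl_update (i : Fin m → ℕ) (l : List (Fin m)) (ν : Fin m) (hν : ν ∈ l) (hl : l.Nodup)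
    (f : F) : Dl D (Function.update i ν (i ν + 1)) l f = Dl D i l (D ν f) := by
  induction l generalizing f with
  | nil => simp at hν
  | cons μ t ih =>
    rcases List.nodup_cons.mp hl with ⟨hμt, ht⟩
    simp only [Dl, List.foldr_cons, Function.comp_apply] at ih ⊢
    rcases List.mem_cons.mp hν with h | h
    · subst h
      have hcong : Dl D (Function.update i ν (i ν + 1)) t f = Dl D i t f :=
        Dl_congr D t (fun μ' hμ' => Function.update_of_ne (by rintro rfl; exact hμt hμ') _ _) f
      show (⇑(D ν))^[Function.update i ν (i ν + 1) ν] (Dl D _ t f) = (⇑(D ν))^[i ν] (Dl D i t (D ν f))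
      rw [Function.update_self, hcong, Dl_comm D hDcomm, ← Function.iterate_succ_apply]
    · have hμν : μ ≠ ν := by rintro rfl; exact hμt h
      show (⇑(D μ))^[Function.update i ν (i ν + 1) μ] (Dl D _ t f) = (⇑(D μ))^[i μ] (Dl D i t (D ν f))
      rw [Function.update_of_ne hμν]
      exact congrArg (⇑(D μ))^[i μ] (ih h ht f)

omit hDcomm

lemma Dl_of_zero {i : Fin m → ℕ} (l : List (Fin m)) (h : ∀ μ ∈ l, i μ = 0) (f : F) :
    Dl D i l f = f := by
  induction l with
  | nil => rfl
  | cons μ t ih =>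
    simp only [Dl, List.foldr_cons, Function.comp_apply] at ih ⊢
    rw [ih (fun ν hν => h ν (List.mem_cons_of_mem _ hν)), h μ List.mem_cons_self]
    rfl

-- Dpow versions
lemma Dpow_add (i : Fin m → ℕ) (f g : F) : Dpow D i (f + g) = Dpow D i f + Dpow D i g :=
  Dl_add D i _ f g

lemma Dpow_zero_val (i : Fin m → ℕ) : Dpow D i (0 : F) = 0 := Dl_zero D i _

lemma Dpow_comm (hDcomm : ∀ μ ν (f : F), D μ (D ν f) = D ν (D μ f)) (i : Fin m → ℕ)
    (ν : Fin m) (f : F) : Dpow D i (D ν f) = D ν (Dpow D i f) := Dl_comm D hDcomm i _ ν f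

lemma Dpow_of_msize_zero {i : Fin m → ℕ} (h : msize i = 0) (f : F) : Dpow D i f = f :=
  Dl_of_zero D _ (fun μ _ => by
    have := Finset.sum_eq_zero_iff.mp h μ (Finset.mem_univ μ); exact this) f

lemma Dpow_update (hDcomm : ∀ μ ν (f : F), D μ (D ν f) = D ν (D μ f)) (i : Fin m → ℕ)
    (ν : Fin m) (f : F) :
    Dpow D (Function.update i ν (i ν + 1)) f = Dpow D i (D ν f) :=
  Dl_update D hDcomm i _ ν (List.mem_finRange ν) (List.nodup_finRange m) f

lemma msize_update (i : Fin m → ℕ) (ν : Fin m) :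
    msize (Function.update i ν (i ν + 1)) = msize i + 1 := by
  unfold msize
  rw [Finset.sum_update_of_mem (Finset.mem_univ ν), ← Finset.erase_eq,
    ← Finset.sum_erase_add Finset.univ i (Finset.mem_univ ν)]
  ring

/-- `Dpow D i` as an additive monoid hom. -/
def DpowHom (i : Fin m → ℕ) : F →+ F where
  toFun := Dpow D i
  map_zero' := Dpow_zero_val D i
  map_add' := Dpow_add D i

end DpowSec
section IBP
variable {𝔽 : Type*} [Field 𝔽] {F : Type*} [CommRing F] [Algebra 𝔽 F] {m : ℕ}
variable (D : Fin m → Derivation 𝔽 F F)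

lemma ibp_aux (hDcomm : ∀ μ ν (f : F), D μ (D ν f) = D ν (D μ f)) :
    ∀ (n : ℕ) (i : Fin m → ℕ), msize i = n → ∀ w g : F,
    IsDiv D (Dpow D i w * g - (-1 : F) ^ (msize i) * (w * Dpow D i g)) := by
  intro n
  induction n with
  | zero =>
    intro i hi w g
    rw [hi, Dpow_of_msize_zero D hi, Dpow_of_msize_zero D hi, pow_zero, one_mul]
    simpa using isDiv_zero D
  | succ n ih =>
    intro i hi w g
    have hex : ∃ ν, i ν ≠ 0 := by
      by_contra hno; push_neg at hno
      rw [msize, Finset.sum_eq_zero (fun ν _ => hno ν)] at hi; exact Nat.succ_ne_zero n hi.symm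
    obtain ⟨ν, hν⟩ := hex
    set i' := Function.update i ν (i ν - 1) with hi'def
    have hup : Function.update i' ν (i' ν + 1) = i := by
      funext x
      by_cases hx : x = ν
      · subst hx; simp only [i', Function.update_self]; omega
      · simp [i', Function.update_of_ne hx]
    have hms : msize i' = n := by
      have h2 := msize_update i' ν
      rw [hup, hi] at h2; omega
    have h1 : Dpow D i w = Dpow D i' (D ν w) := by rw [← hup, Dpow_update D hDcomm]
    have h2 : Dpow D i g = D ν (Dpow D i' g) := by
      rw [← hup, Dpow_update D hDcomm, Dpow_comm D hDcomm]
    have hih := ih i' hms (D ν w) g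
    have hstep : IsDiv D (D ν w * Dpow D i' g + w * D ν (Dpow D i' g)) := by
      have heq : D ν w * Dpow D i' g + w * D ν (Dpow D i' g) = D ν (w * Dpow D i' g) := by
        rw [Derivation.leibniz]; simp only [smul_eq_mul]; ring
      rw [heq]; exact isDiv_applyD ν _
    have hkey : Dpow D i w * g - (-1 : F) ^ (msize i) * (w * Dpow D i g)
        = (Dpow D i' (D ν w) * g - (-1 : F) ^ (msize i') * (D ν w * Dpow D i' g))
          + (-1 : F) ^ (msize i') * (D ν w * Dpow D i' g + w * D ν (Dpow D i' g)) := by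
      rw [h1, h2, hi, hms, pow_succ]; ring
    rw [hkey]
    exact hih.add (IsDiv.neg_one_pow_mul (msize i') hstep)

lemma ibp (hDcomm : ∀ μ ν (f : F), D μ (D ν f) = D ν (D μ f)) (i : Fin m → ℕ) (w g : F) :
    IsDiv D (Dpow D i w * g - (-1 : F) ^ (msize i) * (w * Dpow D i g)) :=
  ibp_aux D hDcomm (msize i) i rfl w g

/-- Integration by parts, dual form. -/
lemma ibp' (hDcomm : ∀ μ ν (f : F), D μ (D ν f) = D ν (D μ f)) (i : Fin m → ℕ) (w g : F) :
    IsDiv D ((-1 : F) ^ (msize i) * Dpow D i w * g - w * Dpow D i g) := by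
  have h := IsDiv.neg_one_pow_mul (msize i) (ibp D hDcomm i w g)
  have hsq : (-1 : F) ^ (msize i) * (-1 : F) ^ (msize i) = 1 := by
    rw [← pow_add]; exact Even.neg_one_pow ⟨msize i, rfl⟩
  have heq : (-1 : F) ^ (msize i) * (Dpow D i w * g - (-1 : F) ^ (msize i) * (w * Dpow D i g))
      = (-1 : F) ^ (msize i) * Dpow D i w * g - w * Dpow D i g := by
    rw [mul_sub, ← mul_assoc, ← mul_assoc, hsq, one_mul, mul_assoc]
  rwa [heq] at h

end IBP
section EvSec
variable {𝔽 : Type*} [Field 𝔽] {F : Type*} [CommRing F] [Algebra 𝔽 F] {m : ℕ} {A : Type*}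
variable (D : Fin m → Derivation 𝔽 F F) (pa : A → Derivation 𝔽 F F)

lemma ev_support (hpafin : ∀ f : F, {a : A | pa a f ≠ 0}.Finite) (ψ : A → F) (x : F) :
    (Function.support fun a => ψ a * pa a x).Finite :=
  (hpafin x).subset fun a ha => fun h0 => ha (by simp [Function.mem_support, h0])

lemma ev_zero (ψ : A → F) : ev pa ψ (0 : F) = 0 := by
  simp [ev]

lemma ev_add (hpafin : ∀ f : F, {a : A | pa a f ≠ 0}.Finite) (ψ : A → F) (x y : F) :
    ev pa ψ (x + y) = ev pa ψ x + ev pa ψ y := by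
  unfold ev
  rw [← finsum_add_distrib (ev_support pa hpafin ψ x) (ev_support pa hpafin ψ y)]
  exact finsum_congr fun a => by rw [map_add]; ring

/-- `ev` as an additive monoid hom in its `F`-argument. -/
def evHom (hpafin : ∀ f : F, {a : A | pa a f ≠ 0}.Finite) (ψ : A → F) : F →+ F where
  toFun := ev pa ψ
  map_zero' := ev_zero pa ψ
  map_add' := ev_add pa hpafin ψ

lemma ev_mul (hpafin : ∀ f : F, {a : A | pa a f ≠ 0}.Finite) (ψ : A → F) (x y : F) :
    ev pa ψ (x * y) = ev pa ψ x * y + x * ev pa ψ y := by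
  unfold ev
  have h1 : ∀ a, ψ a * pa a (x * y) = ψ a * pa a x * y + x * (ψ a * pa a y) := by
    intro a; rw [Derivation.leibniz]; simp only [smul_eq_mul]; ring
  have hsx : (Function.support fun a => ψ a * pa a x * y).Finite :=
    (ev_support pa hpafin ψ x).subset fun a ha => by
      simp only [Function.mem_support] at ha ⊢
      intro h0; exact ha (by rw [h0, zero_mul])
  have hsy : (Function.support fun a => x * (ψ a * pa a y)).Finite :=
    (ev_support pa hpafin ψ y).subset fun a ha => by
      simp only [Function.mem_support] at ha ⊢
      intro h0; exact ha (by rw [h0, mul_zero])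
  rw [finsum_congr h1, finsum_add_distrib hsx hsy,
    ← finsum_mul' _ y (ev_support pa hpafin ψ x), ← mul_finsum' _ x (ev_support pa hpafin ψ y)]

lemma ev_sum (hpafin : ∀ f : F, {a : A | pa a f ≠ 0}.Finite) (ψ : A → F) {ι : Type*}
    (s : Finset ι) (f : ι → F) : ev pa ψ (∑ x ∈ s, f x) = ∑ x ∈ s, ev pa ψ (f x) :=
  map_sum (evHom pa hpafin ψ) f s

end EvSec
section EvD
variable {𝔽 : Type*} [Field 𝔽] {F : Type*} [CommRing F] [Algebra 𝔽 F] {m : ℕ} {A : Type*}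
variable (D : Fin m → Derivation 𝔽 F F) (pa : A → Derivation 𝔽 F F) (Γ : A → Fin m → A → F)

lemma ev_D_comm (hpafin : ∀ f : F, {a : A | pa a f ≠ 0}.Finite)
    (hΓfin : ∀ b : A, {p : Fin m × A | Γ b p.1 p.2 ≠ 0}.Finite)
    (hΓ : ∀ (μ : Fin m) (a : A) (f : F),
      D μ (pa a f) - pa a (D μ f) = ∑ᶠ b, Γ b μ a * pa b f)
    (ψ : A → F) (hInE : ∀ (a : A) (μ : Fin m), nabla D Γ ψ a μ = 0) (μ : Fin m) (f : F) :
    ev pa ψ (D μ f) = D μ (ev pa ψ f) := by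
  classical
  set sf := (hpafin f).toFinset with hsf
  set s2 := (hpafin (D μ f)).toFinset with hs2
  set G : A → Finset A := fun b => ((hΓfin b).toFinset.image Prod.snd) with hG
  set u : Finset A := (sf ∪ s2) ∪ sf.biUnion G with hu
  have hsfu : ∀ a : A, pa a f ≠ 0 → a ∈ u := fun a ha => by
    simp only [hu, Finset.mem_union]; left; left; simpa [hsf] using ha
  have hs2u : ∀ a : A, pa a (D μ f) ≠ 0 → a ∈ u := fun a ha => by
    simp only [hu, Finset.mem_union]; left; right; simpa [hs2] using ha
  have hGu : ∀ a b : A, pa a f ≠ 0 → Γ a μ b ≠ 0 → b ∈ u := fun a b ha hb => by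
    simp only [hu, Finset.mem_union]; right
    refine Finset.mem_biUnion.mpr ⟨a, by simpa [hsf] using ha, ?_⟩
    exact Finset.mem_image.mpr ⟨(μ, b), by simpa using hb, rfl⟩
  have h1 : ev pa ψ (D μ f) = ∑ a ∈ u, ψ a * pa a (D μ f) :=
    finsum_eq_sum_of_support_subset _ (fun a ha => by
      refine hs2u a ?_
      simp only [Function.mem_support] at ha
      intro h0; exact ha (by rw [h0, mul_zero]))
  have h2 : ev pa ψ f = ∑ a ∈ u, ψ a * pa a f :=
    finsum_eq_sum_of_support_subset _ (fun a ha => by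
      refine hsfu a ?_
      simp only [Function.mem_support] at ha
      intro h0; exact ha (by rw [h0, mul_zero]))
  have hpaD : ∀ a, D μ (pa a f) = pa a (D μ f) + ∑ᶠ b, Γ b μ a * pa b f := fun a => by
    have h := hΓ μ a f; rw [sub_eq_iff_eq_add] at h; rw [h]; ring
  have hψD : ∀ a, D μ (ψ a) = -∑ᶠ b, Γ a μ b * ψ b := fun a => by
    have h := hInE a μ; unfold nabla at h; exact eq_neg_of_add_eq_zero_left h
  have h3 : D μ (ev pa ψ f)
      = ∑ a ∈ u, (ψ a * pa a (D μ f)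
          + ψ a * (∑ᶠ b, Γ b μ a * pa b f) - pa a f * (∑ᶠ b, Γ a μ b * ψ b)) := by
    rw [h2, map_sum]
    refine Finset.sum_congr rfl fun a _ => ?_
    rw [Derivation.leibniz]
    simp only [smul_eq_mul]
    rw [hpaD a, hψD a]
    ring
  have hX : ∑ a ∈ u, ψ a * (∑ᶠ b, Γ b μ a * pa b f)
      = ∑ a ∈ u, ∑ b ∈ u, ψ a * (Γ b μ a * pa b f) := by
    refine Finset.sum_congr rfl fun a _ => ?_
    rw [finsum_eq_sum_of_support_subset (fun b => Γ b μ a * pa b f)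
      (s := u) (fun b hb => by
        simp only [Function.mem_support] at hb
        refine hsfu b ?_
        intro h0; exact hb (by rw [h0, mul_zero]))]
    exact Finset.mul_sum _ _ _
  have hY : ∑ a ∈ u, pa a f * (∑ᶠ b, Γ a μ b * ψ b)
      = ∑ a ∈ u, ∑ b ∈ u, pa a f * (Γ a μ b * ψ b) := by
    refine Finset.sum_congr rfl fun a _ => ?_
    by_cases hpa : pa a f = 0
    · simp [hpa]
    · rw [finsum_eq_sum_of_support_subset (fun b => Γ a μ b * ψ b)
        (s := u) (fun b hb => by
          simp only [Function.mem_support] at hb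
          refine hGu a b hpa ?_
          intro h0; exact hb (by rw [h0, zero_mul]))]
      exact Finset.mul_sum _ _ _
  have hXY : ∑ a ∈ u, ∑ b ∈ u, ψ a * (Γ b μ a * pa b f)
      = ∑ a ∈ u, ∑ b ∈ u, pa a f * (Γ a μ b * ψ b) := by
    rw [Finset.sum_comm]
    exact Finset.sum_congr rfl fun a _ => Finset.sum_congr rfl fun b _ => by ring
  rw [h1, h3, Finset.sum_sub_distrib, Finset.sum_add_distrib, hX, hY, hXY]
  ring

lemma ev_iter_comm (hpafin : ∀ f : F, {a : A | pa a f ≠ 0}.Finite)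
    (hΓfin : ∀ b : A, {p : Fin m × A | Γ b p.1 p.2 ≠ 0}.Finite)
    (hΓ : ∀ (μ : Fin m) (a : A) (f : F),
      D μ (pa a f) - pa a (D μ f) = ∑ᶠ b, Γ b μ a * pa b f)
    (ψ : A → F) (hInE : ∀ (a : A) (μ : Fin m), nabla D Γ ψ a μ = 0) (μ : Fin m) (n : ℕ)
    (f : F) : ev pa ψ ((⇑(D μ))^[n] f) = (⇑(D μ))^[n] (ev pa ψ f) := by
  induction n generalizing f with
  | zero => simp
  | succ n ih =>
    rw [Function.iterate_succ_apply', Function.iterate_succ_apply',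
      ev_D_comm D pa Γ hpafin hΓfin hΓ ψ hInE, ih]

lemma ev_Dpow_comm (hpafin : ∀ f : F, {a : A | pa a f ≠ 0}.Finite)
    (hΓfin : ∀ b : A, {p : Fin m × A | Γ b p.1 p.2 ≠ 0}.Finite)
    (hΓ : ∀ (μ : Fin m) (a : A) (f : F),
      D μ (pa a f) - pa a (D μ f) = ∑ᶠ b, Γ b μ a * pa b f)
    (ψ : A → F) (hInE : ∀ (a : A) (μ : Fin m), nabla D Γ ψ a μ = 0) (i : Fin m → ℕ)
    (f : F) : ev pa ψ (Dpow D i f) = Dpow D i (ev pa ψ f) := by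
  suffices h : ∀ l : List (Fin m), ∀ f : F, ev pa ψ (Dl D i l f) = Dl D i l (ev pa ψ f) from
    h (List.finRange m) f
  intro l
  induction l with
  | nil => intro f; rfl
  | cons μ t ih =>
    intro f
    show ev pa ψ ((⇑(D μ))^[i μ] (Dl D i t f)) = (⇑(D μ))^[i μ] (Dl D i t (ev pa ψ f))
    rw [ev_iter_comm D pa Γ hpafin hΓfin hΓ ψ hInE, ih]

end EvD
section Reps
open scoped Classical
variable {𝔽 : Type*} [Field 𝔽] {F : Type*} [CommRing F] [Algebra 𝔽 F] {m : ℕ} {A A' : Type*}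
variable (D : Fin m → Derivation 𝔽 F F) (pa : A → Derivation 𝔽 F F)

lemma pair_eq_sum {B : Type*} {f φ : B → F} {s : Finset B} (h : ∀ a, f a ≠ 0 → a ∈ s) :
    pair f φ = ∑ a ∈ s, f a * φ a :=
  finsum_eq_sum_of_support_subset _ (fun a ha => h a (left_ne_zero_of_mul ha))

lemma pair_eq_sum' {B : Type*} {f φ : B → F} {s : Finset B} (h : ∀ a, φ a ≠ 0 → a ∈ s) :
    pair f φ = ∑ a ∈ s, f a * φ a :=
  finsum_eq_sum_of_support_subset _ (fun a ha => h a (right_ne_zero_of_mul ha))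

variable (Λc : A' → A' → (Fin m → ℕ) → F)
variable (hΛfin : ∀ α : A',
      {p : (Fin m → ℕ) × A' | Λc α p.2 p.1 ≠ 0 ∨ Λc p.2 α p.1 ≠ 0}.Finite)

/-- Index data for `Λ`. -/
def TΛ (α : A') : Finset ((Fin m → ℕ) × A') := (hΛfin α).toFinset
def IΛ (α : A') : Finset (Fin m → ℕ) := (TΛ Λc hΛfin α).image Prod.fst
def BΛ (α : A') : Finset A' := (TΛ Λc hΛfin α).image Prod.snd

lemma mem_IΛ_left {α β : A'} {i : Fin m → ℕ} (h : Λc α β i ≠ 0) : i ∈ IΛ Λc hΛfin α :=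
  Finset.mem_image.mpr ⟨(i, β), by simp [TΛ, Set.Finite.mem_toFinset]; exact Or.inl h, rfl⟩

lemma mem_BΛ_left {α β : A'} {i : Fin m → ℕ} (h : Λc α β i ≠ 0) : β ∈ BΛ Λc hΛfin α :=
  Finset.mem_image.mpr ⟨(i, β), by simp [TΛ, Set.Finite.mem_toFinset]; exact Or.inl h, rfl⟩

lemma mem_IΛ_right {α β : A'} {i : Fin m → ℕ} (h : Λc α β i ≠ 0) : i ∈ IΛ Λc hΛfin β :=
  Finset.mem_image.mpr ⟨(i, α), by simp [TΛ, Set.Finite.mem_toFinset]; exact Or.inr h, rfl⟩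

lemma mem_BΛ_right {α β : A'} {i : Fin m → ℕ} (h : Λc α β i ≠ 0) : α ∈ BΛ Λc hΛfin β :=
  Finset.mem_image.mpr ⟨(i, α), by simp [TΛ, Set.Finite.mem_toFinset]; exact Or.inr h, rfl⟩

lemma Lam_eq_sum (g : A' → F) (α : A') :
    Lam D Λc g α = ∑ i ∈ IΛ Λc hΛfin α, ∑ β ∈ BΛ Λc hΛfin α,
      Λc α β i * Dpow D i (g β) := by
  unfold Lam
  rw [Finset.sum_comm]
  rw [finsum_eq_sum_of_support_subset _ (s := BΛ Λc hΛfin α) (fun β hβ => by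
    simp only [Function.mem_support] at hβ
    obtain ⟨i, hi⟩ : ∃ i, Λc α β i * Dpow D i (g β) ≠ 0 := by
      by_contra hno; push_neg at hno
      exact hβ (by rw [finsum_congr hno]; exact finsum_zero)
    exact mem_BΛ_left Λc hΛfin (left_ne_zero_of_mul hi))]
  refine Finset.sum_congr rfl fun β _ => ?_
  exact finsum_eq_sum_of_support_subset _ (fun i hi => by
    simp only [Function.mem_support] at hi
    exact mem_IΛ_left Λc hΛfin (left_ne_zero_of_mul hi))

lemma evLam_eq_sum (ψ : A → F) (g : A' → F) (α : A') :
    evLam D pa Λc ψ g α = ∑ i ∈ IΛ Λc hΛfin α, ∑ β ∈ BΛ Λc hΛfin α,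
      ev pa ψ (Λc α β i) * Dpow D i (g β) := by
  unfold evLam
  rw [Finset.sum_comm]
  rw [finsum_eq_sum_of_support_subset _ (s := BΛ Λc hΛfin α) (fun β hβ => by
    simp only [Function.mem_support] at hβ
    obtain ⟨i, hi⟩ : ∃ i, ev pa ψ (Λc α β i) * Dpow D i (g β) ≠ 0 := by
      by_contra hno; push_neg at hno
      exact hβ (by rw [finsum_congr hno]; exact finsum_zero)
    have h0 : Λc α β i ≠ 0 := by
      intro h0; apply left_ne_zero_of_mul hi; rw [h0, ev_zero]
    exact mem_BΛ_left Λc hΛfin h0)]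
  refine Finset.sum_congr rfl fun β _ => ?_
  exact finsum_eq_sum_of_support_subset _ (fun i hi => by
    simp only [Function.mem_support] at hi
    have h0 : Λc α β i ≠ 0 := by
      intro h0; apply left_ne_zero_of_mul hi; rw [h0, ev_zero]
    exact mem_IΛ_left Λc hΛfin h0)

lemma LamStar_eq_sum {f : A' → F} {s : Finset A'} (hf : ∀ α, f α ≠ 0 → α ∈ s) (β : A') :
    LamStar D Λc f β = ∑ α ∈ s, ∑ i ∈ IΛ Λc hΛfin α,
      (-1 : F) ^ msize i * Dpow D i (Λc α β i * f α) := by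
  unfold LamStar
  rw [finsum_eq_sum_of_support_subset _ (s := s) (fun α hα => by
    simp only [Function.mem_support] at hα
    refine hf α ?_
    intro h0
    exact hα (by
      refine finsum_eq_zero_of_forall_eq_zero fun i => ?_
      rw [h0, mul_zero, Dpow_zero_val, mul_zero]))]
  refine Finset.sum_congr rfl fun α _ => ?_
  exact finsum_eq_sum_of_support_subset _ (fun i hi => by
    simp only [Function.mem_support] at hi
    have h0 : Λc α β i ≠ 0 := by
      intro h0; exact hi (by rw [h0, zero_mul, Dpow_zero_val, mul_zero])
    exact mem_IΛ_left Λc hΛfin h0)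

lemma LamStar_support {f : A' → F} {s : Finset A'} (hf : ∀ α, f α ≠ 0 → α ∈ s) (β : A')
    (hβ : LamStar D Λc f β ≠ 0) : β ∈ s.biUnion (BΛ Λc hΛfin) := by
  rw [LamStar_eq_sum D Λc hΛfin hf] at hβ
  obtain ⟨α, hα, hne⟩ := Finset.exists_ne_zero_of_sum_ne_zero hβ
  obtain ⟨i, _, hne2⟩ := Finset.exists_ne_zero_of_sum_ne_zero hne
  have h0 : Λc α β i ≠ 0 := by
    intro h0; exact hne2 (by rw [h0, zero_mul, Dpow_zero_val, mul_zero])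
  exact Finset.mem_biUnion.mpr ⟨α, hα, mem_BΛ_left Λc hΛfin h0⟩

end Reps
section Dual
open scoped Classical
variable {𝔽 : Type*} [Field 𝔽] {F : Type*} [CommRing F] [Algebra 𝔽 F] {m : ℕ} {A A' : Type*}
variable (D : Fin m → Derivation 𝔽 F F)
variable (Λc : A' → A' → (Fin m → ℕ) → F)
variable (hΛfin : ∀ α : A',
      {p : (Fin m → ℕ) × A' | Λc α p.2 p.1 ≠ 0 ∨ Λc p.2 α p.1 ≠ 0}.Finite)

include hΛfin in
lemma Lam_duality (hDcomm : ∀ μ ν (f : F), D μ (D ν f) = D ν (D μ f))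
    {f : A' → F} {s : Finset A'} (hf : ∀ α, f α ≠ 0 → α ∈ s) (g : A' → F) :
    IsDiv D (pair f (Lam D Λc g) - pair g (LamStar D Λc f)) := by
  set V := s.biUnion (BΛ Λc hΛfin) with hV
  have h1 : pair f (Lam D Λc g)
      = ∑ α ∈ s, ∑ i ∈ IΛ Λc hΛfin α, ∑ β ∈ V, f α * (Λc α β i * Dpow D i (g β)) := by
    rw [pair_eq_sum hf]
    refine Finset.sum_congr rfl fun α hα => ?_
    rw [Lam_eq_sum D Λc hΛfin, Finset.mul_sum]
    refine Finset.sum_congr rfl fun i _ => ?_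
    rw [Finset.mul_sum]
    refine Finset.sum_subset (fun β hβ => Finset.mem_biUnion.mpr ⟨α, hα, hβ⟩) ?_
    intro β _ hβ
    have h0 : Λc α β i = 0 := by
      by_contra h0; exact hβ (mem_BΛ_left Λc hΛfin h0)
    rw [h0, zero_mul, mul_zero]
  have h2 : pair g (LamStar D Λc f)
      = ∑ α ∈ s, ∑ i ∈ IΛ Λc hΛfin α, ∑ β ∈ V,
          g β * ((-1 : F) ^ msize i * Dpow D i (Λc α β i * f α)) := by
    rw [pair_eq_sum' (LamStar_support D Λc hΛfin hf)]
    have : ∀ β ∈ V, g β * LamStar D Λc f β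
        = ∑ α ∈ s, ∑ i ∈ IΛ Λc hΛfin α,
            g β * ((-1 : F) ^ msize i * Dpow D i (Λc α β i * f α)) := by
      intro β _
      rw [LamStar_eq_sum D Λc hΛfin hf, Finset.mul_sum]
      exact Finset.sum_congr rfl fun α _ => Finset.mul_sum _ _ _
    rw [Finset.sum_congr rfl this, Finset.sum_comm]
    refine Finset.sum_congr rfl fun α _ => Finset.sum_comm
  rw [h1, h2, ← Finset.sum_sub_distrib]
  refine isDiv_sum _ _ fun α _ => ?_
  rw [← Finset.sum_sub_distrib]
  refine isDiv_sum _ _ fun i _ => ?_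
  rw [← Finset.sum_sub_distrib]
  refine isDiv_sum _ _ fun β _ => ?_
  have h := (ibp' D hDcomm i (Λc α β i * f α) (g β)).neg
  have he : -((-1 : F) ^ msize i * Dpow D i (Λc α β i * f α) * g β
      - Λc α β i * f α * Dpow D i (g β))
      = f α * (Λc α β i * Dpow D i (g β))
        - g β * ((-1 : F) ^ msize i * Dpow D i (Λc α β i * f α)) := by ring
  rwa [he] at h

include hΛfin in
lemma lam_pair_symm (hDcomm : ∀ μ ν (f : F), D μ (D ν f) = D ν (D μ f))
    (hskew : ∀ f : A' → F, {α : A' | f α ≠ 0}.Finite →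
      ∀ α : A', LamStar D Λc f α = -Lam D Λc f α)
    {f : A' → F} {s : Finset A'} (hf : ∀ α, f α ≠ 0 → α ∈ s) (g : A' → F) :
    IsDiv D (pair f (Lam D Λc g) + pair g (Lam D Λc f)) := by
  have hfin : {α : A' | f α ≠ 0}.Finite :=
    Set.Finite.subset s.finite_toSet (fun α hα => hf α hα)
  have hs := hskew f hfin
  have hkey : pair g (LamStar D Λc f) = -pair g (Lam D Λc f) := by
    unfold pair
    rw [finsum_congr (fun α => by rw [hs α, mul_neg])]
    exact finsum_neg_distrib _
  have hdual := Lam_duality D Λc hΛfin hDcomm hf g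
  rwa [hkey, sub_neg_eq_add] at hdual

variable (jc : A → (Fin m → ℕ) → A' → F)
variable (hjfin : ∀ a : A, {p : (Fin m → ℕ) × A' | jc a p.1 p.2 ≠ 0}.Finite)

def Tj (a : A) : Finset ((Fin m → ℕ) × A') := (hjfin a).toFinset
def Ij (a : A) : Finset (Fin m → ℕ) := (Tj jc hjfin a).image Prod.fst
def Bj (a : A) : Finset A' := (Tj jc hjfin a).image Prod.snd

lemma mem_Ij {a : A} {i : Fin m → ℕ} {α : A'} (h : jc a i α ≠ 0) : i ∈ Ij jc hjfin a :=
  Finset.mem_image.mpr ⟨(i, α), by simpa [Tj, Set.Finite.mem_toFinset] using h, rfl⟩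

lemma mem_Bj {a : A} {i : Fin m → ℕ} {α : A'} (h : jc a i α ≠ 0) : α ∈ Bj jc hjfin a :=
  Finset.mem_image.mpr ⟨(i, α), by simpa [Tj, Set.Finite.mem_toFinset] using h, rfl⟩

lemma jstar_eq_sum {v : A → F} {s : Finset A} (hv : ∀ a, v a ≠ 0 → a ∈ s) (α : A') :
    jstar D jc v α = ∑ a ∈ s, ∑ i ∈ Ij jc hjfin a,
      (-1 : F) ^ msize i * Dpow D i (jc a i α * v a) := by
  unfold jstar
  rw [finsum_eq_sum_of_support_subset _ (s := s) (fun a ha => by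
    simp only [Function.mem_support] at ha
    refine hv a ?_
    intro h0
    refine ha (finsum_eq_zero_of_forall_eq_zero fun i => ?_)
    rw [h0, mul_zero, Dpow_zero_val, mul_zero])]
  refine Finset.sum_congr rfl fun a _ => ?_
  exact finsum_eq_sum_of_support_subset _ (fun i hi => by
    simp only [Function.mem_support] at hi
    have h0 : jc a i α ≠ 0 := by
      intro h0; exact hi (by rw [h0, zero_mul, Dpow_zero_val, mul_zero])
    exact mem_Ij jc hjfin h0)

lemma jstar_support {v : A → F} {s : Finset A} (hv : ∀ a, v a ≠ 0 → a ∈ s) (α : A')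
    (hα : jstar D jc v α ≠ 0) : α ∈ s.biUnion (Bj jc hjfin) := by
  rw [jstar_eq_sum D jc hjfin hv] at hα
  obtain ⟨a, ha, hne⟩ := Finset.exists_ne_zero_of_sum_ne_zero hα
  obtain ⟨i, _, hne2⟩ := Finset.exists_ne_zero_of_sum_ne_zero hne
  have h0 : jc a i α ≠ 0 := by
    intro h0; exact hne2 (by rw [h0, zero_mul, Dpow_zero_val, mul_zero])
  exact Finset.mem_biUnion.mpr ⟨a, ha, mem_Bj jc hjfin h0⟩

lemma jmap_eq_sum (g : A' → F) (a : A) :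
    jmap D jc g a = ∑ i ∈ Ij jc hjfin a, ∑ α ∈ Bj jc hjfin a,
      jc a i α * Dpow D i (g α) := by
  unfold jmap
  rw [finsum_eq_sum_of_support_subset _ (s := Ij jc hjfin a) (fun i hi => by
    simp only [Function.mem_support] at hi
    obtain ⟨α, hα⟩ : ∃ α, jc a i α * Dpow D i (g α) ≠ 0 := by
      by_contra hno; push_neg at hno
      exact hi (by rw [finsum_congr hno]; exact finsum_zero)
    exact mem_Ij jc hjfin (left_ne_zero_of_mul hα))]
  refine Finset.sum_congr rfl fun i _ => ?_
  exact finsum_eq_sum_of_support_subset _ (fun α hα => by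
    simp only [Function.mem_support] at hα
    exact mem_Bj jc hjfin (left_ne_zero_of_mul hα))

include hjfin in
lemma jstar_duality (hDcomm : ∀ μ ν (f : F), D μ (D ν f) = D ν (D μ f))
    {v : A → F} {s : Finset A} (hv : ∀ a, v a ≠ 0 → a ∈ s) (g : A' → F) :
    IsDiv D (pair (jstar D jc v) g - pair v (jmap D jc g)) := by
  set U := s.biUnion (Bj jc hjfin) with hU
  have h1 : pair (jstar D jc v) g
      = ∑ a ∈ s, ∑ i ∈ Ij jc hjfin a, ∑ α ∈ U,
          (-1 : F) ^ msize i * Dpow D i (jc a i α * v a) * g α := by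
    rw [pair_eq_sum (jstar_support D jc hjfin hv)]
    have : ∀ α ∈ U, jstar D jc v α * g α
        = ∑ a ∈ s, ∑ i ∈ Ij jc hjfin a,
            (-1 : F) ^ msize i * Dpow D i (jc a i α * v a) * g α := by
      intro α _
      rw [jstar_eq_sum D jc hjfin hv, Finset.sum_mul]
      exact Finset.sum_congr rfl fun a _ => Finset.sum_mul _ _ _
    rw [Finset.sum_congr rfl this, Finset.sum_comm]
    refine Finset.sum_congr rfl fun a _ => Finset.sum_comm
  have h2 : pair v (jmap D jc g)
      = ∑ a ∈ s, ∑ i ∈ Ij jc hjfin a, ∑ α ∈ U, v a * (jc a i α * Dpow D i (g α)) := by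
    rw [pair_eq_sum hv]
    refine Finset.sum_congr rfl fun a ha => ?_
    rw [jmap_eq_sum D jc hjfin, Finset.mul_sum]
    refine Finset.sum_congr rfl fun i _ => ?_
    rw [Finset.mul_sum]
    refine Finset.sum_subset (fun α hα => Finset.mem_biUnion.mpr ⟨a, ha, hα⟩) ?_
    intro α _ hα
    have h0 : jc a i α = 0 := by
      by_contra h0; exact hα (mem_Bj jc hjfin h0)
    rw [h0, zero_mul, mul_zero]
  rw [h1, h2, ← Finset.sum_sub_distrib]
  refine isDiv_sum _ _ fun a _ => ?_
  rw [← Finset.sum_sub_distrib]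
  refine isDiv_sum _ _ fun i _ => ?_
  rw [← Finset.sum_sub_distrib]
  refine isDiv_sum _ _ fun α _ => ?_
  have h := ibp' D hDcomm i (jc a i α * v a) (g α)
  have he : (-1 : F) ^ msize i * Dpow D i (jc a i α * v a) * g α
      - jc a i α * v a * Dpow D i (g α)
      = (-1 : F) ^ msize i * Dpow D i (jc a i α * v a) * g α
        - v a * (jc a i α * Dpow D i (g α)) := by ring
  rwa [he] at h

end Dual
section Main
open scoped Classical
variable {𝔽 : Type*} [Field 𝔽] {F : Type*} [CommRing F] [Algebra 𝔽 F]
    {m : ℕ} {A A' : Type*}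
    (D : Fin m → Derivation 𝔽 F F)
    (pa : A → Derivation 𝔽 F F)
    (Γ : A → Fin m → A → F)
    (jc : A → (Fin m → ℕ) → A' → F)
    (Λc : A' → A' → (Fin m → ℕ) → F)

lemma pa_neg_one_pow (a : A) (n : ℕ) : pa a ((-1 : F) ^ n) = 0 := by
  induction n with
  | zero => simpa using Derivation.map_one_eq_zero (pa a)
  | succ n ih =>
    rw [pow_succ, Derivation.leibniz]
    simp only [smul_eq_mul, ih]
    have h1 : pa a (-1 : F) = 0 := by
      have := Derivation.map_one_eq_zero (pa a)
      have h2 : pa a (-1 : F) = -pa a (1 : F) := map_neg _ _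
      rw [h2, this, neg_zero]
    rw [h1]
    ring

lemma ev_neg_one_pow (ψ : A → F) (n : ℕ) : ev pa ψ ((-1 : F) ^ n) = 0 := by
  unfold ev
  rw [finsum_congr (fun a => by rw [pa_neg_one_pow pa a n, mul_zero])]
  exact finsum_zero

lemma ev_neg_one_pow_mul (hpafin : ∀ f : F, {a : A | pa a f ≠ 0}.Finite) (ψ : A → F)
    (n : ℕ) (x : F) : ev pa ψ ((-1 : F) ^ n * x) = (-1 : F) ^ n * ev pa ψ x := by
  rw [ev_mul pa hpafin, ev_neg_one_pow]; ring

lemma IsDiv.ev' (hpafin : ∀ f : F, {a : A | pa a f ≠ 0}.Finite)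
    (hΓfin : ∀ b : A, {p : Fin m × A | Γ b p.1 p.2 ≠ 0}.Finite)
    (hΓ : ∀ (μ : Fin m) (a : A) (f : F),
      D μ (pa a f) - pa a (D μ f) = ∑ᶠ b, Γ b μ a * pa b f)
    (ψ : A → F) (hInE : ∀ (a : A) (μ : Fin m), nabla D Γ ψ a μ = 0)
    {x : F} (hx : IsDiv D x) : IsDiv D (ev pa ψ x) := by
  obtain ⟨χ, rfl⟩ := hx
  refine ⟨fun μ => ev pa ψ (χ μ), ?_⟩
  rw [ev_sum pa hpafin]
  exact Finset.sum_congr rfl fun μ _ =>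
    ev_D_comm D pa Γ hpafin hΓfin hΓ ψ hInE μ (χ μ)

lemma vard_mem (hpafin : ∀ f : F, {a : A | pa a f ≠ 0}.Finite)
    (hjfin : ∀ a : A, {p : (Fin m → ℕ) × A' | jc a p.1 p.2 ≠ 0}.Finite) (R : F) :
    ∀ α, vard D pa jc R α ≠ 0 →
      α ∈ (hpafin R).toFinset.biUnion (Bj jc hjfin) := fun α hα =>
  jstar_support D jc hjfin (s := (hpafin R).toFinset)
    (fun a ha => (hpafin R).mem_toFinset.mpr ha) α hα

lemma ev_jstar (hpafin : ∀ f : F, {a : A | pa a f ≠ 0}.Finite)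
    (hΓfin : ∀ b : A, {p : Fin m × A | Γ b p.1 p.2 ≠ 0}.Finite)
    (hΓ : ∀ (μ : Fin m) (a : A) (f : F),
      D μ (pa a f) - pa a (D μ f) = ∑ᶠ b, Γ b μ a * pa b f)
    (hjfin : ∀ a : A, {p : (Fin m → ℕ) × A' | jc a p.1 p.2 ≠ 0}.Finite)
    (ψ : A → F) (hInE : ∀ (a : A) (μ : Fin m), nabla D Γ ψ a μ = 0)
    (hev0 : ∀ (a : A) (i : Fin m → ℕ) (α : A'), ev pa ψ (jc a i α) = 0)
    (v : A → F) {s : Finset A} (hv : ∀ a, v a ≠ 0 → a ∈ s) (α : A') :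
    ev pa ψ (jstar D jc v α) = jstar D jc (fun a => ev pa ψ (v a)) α := by
  rw [jstar_eq_sum D jc hjfin hv α,
    jstar_eq_sum D jc hjfin (v := fun a => ev pa ψ (v a)) (s := s)
      (fun a ha => hv a (by intro h0; exact ha (show ev pa ψ (v a) = 0 by rw [h0]; exact ev_zero pa ψ))) α]
  rw [ev_sum pa hpafin]
  refine Finset.sum_congr rfl fun a _ => ?_
  rw [ev_sum pa hpafin]
  refine Finset.sum_congr rfl fun i _ => ?_
  show ev pa ψ ((-1 : F) ^ msize i * Dpow D i (jc a i α * v a)) = _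
  rw [ev_neg_one_pow_mul pa hpafin,
    ev_Dpow_comm D pa Γ hpafin hΓfin hΓ ψ hInE,
    ev_mul pa hpafin, hev0 a i α, zero_mul, zero_add]

end Main
section Main2
open scoped Classical
variable {𝔽 : Type*} [Field 𝔽] {F : Type*} [CommRing F] [Algebra 𝔽 F]
    {m : ℕ} {A A' : Type*}
    (D : Fin m → Derivation 𝔽 F F)
    (pa : A → Derivation 𝔽 F F)
    (Γ : A → Fin m → A → F)
    (jc : A → (Fin m → ℕ) → A' → F)
    (Λc : A' → A' → (Fin m → ℕ) → F)

/-- Lemma B: evolutionary differentiation of a pairing `⟨f, Λg⟩`. -/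
lemma ev_pair_Lam
    (hpafin : ∀ f : F, {a : A | pa a f ≠ 0}.Finite)
    (hΓfin : ∀ b : A, {p : Fin m × A | Γ b p.1 p.2 ≠ 0}.Finite)
    (hΓ : ∀ (μ : Fin m) (a : A) (f : F),
      D μ (pa a f) - pa a (D μ f) = ∑ᶠ b, Γ b μ a * pa b f)
    (hΛfin : ∀ α : A',
      {p : (Fin m → ℕ) × A' | Λc α p.2 p.1 ≠ 0 ∨ Λc p.2 α p.1 ≠ 0}.Finite)
    (ψ : A → F) (hInE : ∀ (a : A) (μ : Fin m), nabla D Γ ψ a μ = 0)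
    {f : A' → F} {s : Finset A'} (hf : ∀ α, f α ≠ 0 → α ∈ s) (g : A' → F) :
    ev pa ψ (pair f (Lam D Λc g))
      = pair (fun α => ev pa ψ (f α)) (Lam D Λc g)
        + pair f (evLam D pa Λc ψ g)
        + pair f (Lam D Λc (fun β => ev pa ψ (g β))) := by
  rw [pair_eq_sum hf (φ := Lam D Λc g), ev_sum pa hpafin]
  have hterm : ∀ α ∈ s, ev pa ψ (f α * Lam D Λc g α)
      = ev pa ψ (f α) * Lam D Λc g α
        + f α * evLam D pa Λc ψ g α
        + f α * Lam D Λc (fun β => ev pa ψ (g β)) α := by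
    intro α _
    rw [ev_mul pa hpafin]
    have hL : ev pa ψ (Lam D Λc g α)
        = evLam D pa Λc ψ g α + Lam D Λc (fun β => ev pa ψ (g β)) α := by
      rw [Lam_eq_sum D Λc hΛfin, ev_sum pa hpafin,
        evLam_eq_sum D pa Λc hΛfin, Lam_eq_sum D Λc hΛfin, ← Finset.sum_add_distrib]
      refine Finset.sum_congr rfl fun i _ => ?_
      rw [ev_sum pa hpafin, ← Finset.sum_add_distrib]
      refine Finset.sum_congr rfl fun β _ => ?_
      rw [ev_mul pa hpafin, ev_Dpow_comm D pa Γ hpafin hΓfin hΓ ψ hInE]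
    rw [hL]; ring
  rw [Finset.sum_congr rfl hterm, Finset.sum_add_distrib, Finset.sum_add_distrib]
  congr 1
  · congr 1
    · exact (pair_eq_sum (fun α hα => hf α (by
        intro h0
        exact hα (show ev pa ψ (f α) = 0 by rw [h0]; exact ev_zero pa ψ)))).symm
    · exact (pair_eq_sum hf).symm
  · exact (pair_eq_sum hf).symm

/-- The symmetric second-variation matrix pairing. -/
def Smat (L : F) (χ η : A → F) : F := ∑ᶠ a, ∑ᶠ b, χ b * (η a * pa a (pa b L))

lemma Smat_eq_sum (hpafin : ∀ f : F, {a : A | pa a f ≠ 0}.Finite) (L : F) (χ η : A → F) :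
    Smat pa L χ η
      = ∑ a ∈ (hpafin L).toFinset ∪ (hpafin L).toFinset.biUnion
            (fun b => (hpafin (pa b L)).toFinset),
          ∑ b ∈ (hpafin L).toFinset ∪ (hpafin L).toFinset.biUnion
            (fun b => (hpafin (pa b L)).toFinset),
          χ b * (η a * pa a (pa b L)) := by
  set u := (hpafin L).toFinset ∪ (hpafin L).toFinset.biUnion
      (fun b => (hpafin (pa b L)).toFinset) with hu
  have hmemb : ∀ a b : A, pa a (pa b L) ≠ 0 → b ∈ u := by
    intro a b h
    have hb : pa b L ≠ 0 := fun h0 => h (by rw [h0, map_zero])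
    exact Finset.mem_union.mpr (Or.inl ((hpafin L).mem_toFinset.mpr hb))
  have hmema : ∀ a b : A, pa a (pa b L) ≠ 0 → a ∈ u := by
    intro a b h
    have hb : pa b L ≠ 0 := fun h0 => h (by rw [h0, map_zero])
    exact Finset.mem_union.mpr (Or.inr (Finset.mem_biUnion.mpr
      ⟨b, (hpafin L).mem_toFinset.mpr hb, (hpafin (pa b L)).mem_toFinset.mpr h⟩))
  unfold Smat
  rw [finsum_eq_sum_of_support_subset _ (s := u) (fun a ha => by
    simp only [Function.mem_support] at ha
    obtain ⟨b, hb⟩ : ∃ b, χ b * (η a * pa a (pa b L)) ≠ 0 := by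
      by_contra hno; push_neg at hno
      exact ha (by rw [finsum_congr hno]; exact finsum_zero)
    exact hmema a b (right_ne_zero_of_mul (right_ne_zero_of_mul hb)))]
  refine Finset.sum_congr rfl fun a _ => ?_
  exact finsum_eq_sum_of_support_subset _ (fun b hb => by
    simp only [Function.mem_support] at hb
    exact hmemb a b (right_ne_zero_of_mul (right_ne_zero_of_mul hb)))

lemma Smat_symm (hpacomm : ∀ a b (f : F), pa a (pa b f) = pa b (pa a f))
    (hpafin : ∀ f : F, {a : A | pa a f ≠ 0}.Finite) (L : F) (χ η : A → F) :
    Smat pa L χ η = Smat pa L η χ := by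
  rw [Smat_eq_sum pa hpafin, Smat_eq_sum pa hpafin, Finset.sum_comm]
  exact Finset.sum_congr rfl fun a _ => Finset.sum_congr rfl fun b _ => by
    rw [hpacomm a b L]; ring

end Main2
section Main3
open scoped Classical
variable {𝔽 : Type*} [Field 𝔽] {F : Type*} [CommRing F] [Algebra 𝔽 F]
    {m : ℕ} {A A' : Type*}
    (D : Fin m → Derivation 𝔽 F F)
    (pa : A → Derivation 𝔽 F F)
    (Γ : A → Fin m → A → F)
    (jc : A → (Fin m → ℕ) → A' → F)
    (Λc : A' → A' → (Fin m → ℕ) → F)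

/-- Lemma E: `⟨ev_ψ(δL), Λ(δM)⟩ ≡ S(ψ, φ(M); L)` mod divergences. -/
lemma pair_ev_vard
    (hDcomm : ∀ μ ν (f : F), D μ (D ν f) = D ν (D μ f))
    (hpacomm : ∀ a b (f : F), pa a (pa b f) = pa b (pa a f))
    (hpafin : ∀ f : F, {a : A | pa a f ≠ 0}.Finite)
    (hΓfin : ∀ b : A, {p : Fin m × A | Γ b p.1 p.2 ≠ 0}.Finite)
    (hΓ : ∀ (μ : Fin m) (a : A) (f : F),
      D μ (pa a f) - pa a (D μ f) = ∑ᶠ b, Γ b μ a * pa b f)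
    (hjfin : ∀ a : A, {p : (Fin m → ℕ) × A' | jc a p.1 p.2 ≠ 0}.Finite)
    (ψ : A → F) (hInE : ∀ (a : A) (μ : Fin m), nabla D Γ ψ a μ = 0)
    (hev0 : ∀ (a : A) (i : Fin m → ℕ) (α : A'), ev pa ψ (jc a i α) = 0)
    (L M : F) :
    IsDiv D (pair (fun α => ev pa ψ (vard D pa jc L α))
        (Lam D Λc (vard D pa jc M))
      - Smat pa L ψ (hamv D pa jc Λc M)) := by
  have h1 : (fun α => ev pa ψ (vard D pa jc L α))
      = jstar D jc (fun a => ev pa ψ (pa a L)) := by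
    funext α
    exact ev_jstar D pa Γ jc hpafin hΓfin hΓ hjfin ψ hInE hev0
      (fun a => pa a L) (s := (hpafin L).toFinset)
      (fun a ha => (hpafin L).mem_toFinset.mpr ha) α
  set u := (hpafin L).toFinset ∪ (hpafin L).toFinset.biUnion
      (fun b => (hpafin (pa b L)).toFinset) with hu
  have hv' : ∀ a, ev pa ψ (pa a L) ≠ 0 → a ∈ u := by
    intro a ha
    unfold ev at ha
    obtain ⟨b, hb⟩ : ∃ b, ψ b * pa b (pa a L) ≠ 0 := by
      by_contra hno; push_neg at hno
      exact ha (by rw [finsum_congr hno]; exact finsum_zero)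
    have h2 : pa b (pa a L) ≠ 0 := right_ne_zero_of_mul hb
    have h3 : pa a (pa b L) ≠ 0 := by rw [hpacomm]; exact h2
    have hbL : pa b L ≠ 0 := fun h0 => h3 (by rw [h0, map_zero])
    exact Finset.mem_union.mpr (Or.inr (Finset.mem_biUnion.mpr
      ⟨b, (hpafin L).mem_toFinset.mpr hbL, (hpafin (pa b L)).mem_toFinset.mpr h3⟩))
  have h2 := jstar_duality D jc hjfin hDcomm (v := fun a => ev pa ψ (pa a L))
    (s := u) hv' (Lam D Λc (vard D pa jc M))
  have h3 : pair (fun a => ev pa ψ (pa a L))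
      (jmap D jc (Lam D Λc (vard D pa jc M))) = Smat pa L ψ (hamv D pa jc Λc M) := by
    unfold pair Smat
    refine finsum_congr fun a => ?_
    show ev pa ψ (pa a L) * jmap D jc (Lam D Λc (vard D pa jc M)) a = _
    unfold ev
    rw [finsum_mul' _ _ (ev_support pa hpafin ψ (pa a L))]
    refine finsum_congr fun b => ?_
    rw [hpacomm b a L]
    show ψ b * pa a (pa b L) * jmap D jc (Lam D Λc (vard D pa jc M)) a
      = ψ b * (hamv D pa jc Λc M a * pa a (pa b L))
    unfold hamv
    ring
  rw [h1, ← h3]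
  exact h2

/-- Lemma A: `{K, R} ≡ -ev_{φ(K)} R` mod divergences. -/
lemma bracket_ev
    (hDcomm : ∀ μ ν (f : F), D μ (D ν f) = D ν (D μ f))
    (hpafin : ∀ f : F, {a : A | pa a f ≠ 0}.Finite)
    (hjfin : ∀ a : A, {p : (Fin m → ℕ) × A' | jc a p.1 p.2 ≠ 0}.Finite)
    (hΛfin : ∀ α : A',
      {p : (Fin m → ℕ) × A' | Λc α p.2 p.1 ≠ 0 ∨ Λc p.2 α p.1 ≠ 0}.Finite)
    (hskew : ∀ f : A' → F, {α : A' | f α ≠ 0}.Finite →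
      ∀ α : A', LamStar D Λc f α = -Lam D Λc f α)
    (K R : F) :
    IsDiv D (pair (vard D pa jc K) (Lam D Λc (vard D pa jc R))
      + ev pa (hamv D pa jc Λc K) R) := by
  have c1 := lam_pair_symm D Λc hΛfin hDcomm hskew
    (hf := vard_mem D pa jc hpafin hjfin K) (g := vard D pa jc R)
  have c2 := jstar_duality D jc hjfin hDcomm (v := fun a => pa a R)
    (s := (hpafin R).toFinset) (fun a ha => (hpafin R).mem_toFinset.mpr ha)
    (Lam D Λc (vard D pa jc K))
  have c2' : IsDiv D (pair (vard D pa jc R) (Lam D Λc (vard D pa jc K))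
      - pair (fun a => pa a R) (jmap D jc (Lam D Λc (vard D pa jc K)))) := c2
  have c3 : pair (fun a => pa a R) (jmap D jc (Lam D Λc (vard D pa jc K)))
      = ev pa (hamv D pa jc Λc K) R := by
    unfold pair ev hamv
    exact finsum_congr fun a => mul_comm _ _
  rw [c3] at c2'
  have hcomb := c1.sub c2'
  have heq : pair (vard D pa jc K) (Lam D Λc (vard D pa jc R))
        + pair (vard D pa jc R) (Lam D Λc (vard D pa jc K))
      - (pair (vard D pa jc R) (Lam D Λc (vard D pa jc K))
        - ev pa (hamv D pa jc Λc K) R)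
      = pair (vard D pa jc K) (Lam D Λc (vard D pa jc R))
        + ev pa (hamv D pa jc Λc K) R := by ring
  rwa [heq] at hcomb

/-- Lemma D: skew-symmetry (mod divergences) of the commutator pairing. -/
lemma comm_pair_symm
    (hDcomm : ∀ μ ν (f : F), D μ (D ν f) = D ν (D μ f))
    (hpafin : ∀ f : F, {a : A | pa a f ≠ 0}.Finite)
    (hΓfin : ∀ b : A, {p : Fin m × A | Γ b p.1 p.2 ≠ 0}.Finite)
    (hΓ : ∀ (μ : Fin m) (a : A) (f : F),
      D μ (pa a f) - pa a (D μ f) = ∑ᶠ b, Γ b μ a * pa b f)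
    (hjfin : ∀ a : A, {p : (Fin m → ℕ) × A' | jc a p.1 p.2 ≠ 0}.Finite)
    (hΛfin : ∀ α : A',
      {p : (Fin m → ℕ) × A' | Λc α p.2 p.1 ≠ 0 ∨ Λc p.2 α p.1 ≠ 0}.Finite)
    (hskew : ∀ f : A' → F, {α : A' | f α ≠ 0}.Finite →
      ∀ α : A', LamStar D Λc f α = -Lam D Λc f α)
    (ψ : A → F) (hInE : ∀ (a : A) (μ : Fin m), nabla D Γ ψ a μ = 0)
    (L M : F) :
    IsDiv D (pair (vard D pa jc L) (evLam D pa Λc ψ (vard D pa jc M))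
      + pair (vard D pa jc M) (evLam D pa Λc ψ (vard D pa jc L))) := by
  have hfL := vard_mem D pa jc hpafin hjfin L
  have hfM := vard_mem D pa jc hpafin hjfin M
  have d0 := lam_pair_symm D Λc hΛfin hDcomm hskew (hf := hfL) (g := vard D pa jc M)
  have d1 := IsDiv.ev' D pa Γ hpafin hΓfin hΓ ψ hInE d0
  have e1 : ev pa ψ (pair (vard D pa jc L) (Lam D Λc (vard D pa jc M))
        + pair (vard D pa jc M) (Lam D Λc (vard D pa jc L)))
      = (pair (fun α => ev pa ψ (vard D pa jc L α)) (Lam D Λc (vard D pa jc M))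
          + pair (vard D pa jc L) (evLam D pa Λc ψ (vard D pa jc M))
          + pair (vard D pa jc L) (Lam D Λc (fun β => ev pa ψ (vard D pa jc M β))))
        + (pair (fun α => ev pa ψ (vard D pa jc M α)) (Lam D Λc (vard D pa jc L))
          + pair (vard D pa jc M) (evLam D pa Λc ψ (vard D pa jc L))
          + pair (vard D pa jc M) (Lam D Λc (fun β => ev pa ψ (vard D pa jc L β)))) := by
    rw [ev_add pa hpafin,
      ev_pair_Lam D pa Γ Λc hpafin hΓfin hΓ hΛfin ψ hInE hfL,
      ev_pair_Lam D pa Γ Λc hpafin hΓfin hΓ hΛfin ψ hInE hfM]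
  have c1 := lam_pair_symm D Λc hΛfin hDcomm hskew
    (f := fun α => ev pa ψ (vard D pa jc L α))
    (hf := fun α hα => hfL α (by
      intro h0
      exact hα (show ev pa ψ (vard D pa jc L α) = 0 by rw [h0]; exact ev_zero pa ψ)))
    (g := vard D pa jc M)
  have c2 := lam_pair_symm D Λc hΛfin hDcomm hskew
    (f := fun α => ev pa ψ (vard D pa jc M α))
    (hf := fun α hα => hfM α (by
      intro h0
      exact hα (show ev pa ψ (vard D pa jc M α) = 0 by rw [h0]; exact ev_zero pa ψ)))
    (g := vard D pa jc L)
  have hcomb := (d1.sub c1).sub c2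
  have hkey : ev pa ψ (pair (vard D pa jc L) (Lam D Λc (vard D pa jc M))
        + pair (vard D pa jc M) (Lam D Λc (vard D pa jc L)))
      - (pair (fun α => ev pa ψ (vard D pa jc L α)) (Lam D Λc (vard D pa jc M))
        + pair (vard D pa jc M) (Lam D Λc (fun α => ev pa ψ (vard D pa jc L α))))
      - (pair (fun α => ev pa ψ (vard D pa jc M α)) (Lam D Λc (vard D pa jc L))
        + pair (vard D pa jc L) (Lam D Λc (fun α => ev pa ψ (vard D pa jc M α))))
      = pair (vard D pa jc L) (evLam D pa Λc ψ (vard D pa jc M))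
        + pair (vard D pa jc M) (evLam D pa Λc ψ (vard D pa jc L)) := by
    rw [e1]; ring
  rwa [hkey] at hcomb

end Main3
/-- Main Theorem: representation of the Jacobi identity:
with `δR = j*(∂R)`, `φ(R) = j(Λ(δR))` and `{K,L} = ⟨δK, Λ(δL)⟩`, the cyclic sum
`⟨δK, Λ(δ{L,M})⟩ + c.p.` differs from `⟨δK, [ev_{φ(L)},Λ](δM)⟩ + c.p.`
by a divergence. -/
theorem stmt_13
    {𝔽 : Type*} [Field 𝔽] [CharZero 𝔽] {F : Type*} [CommRing F] [Algebra 𝔽 F]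
    {m : ℕ} {A A' : Type*}
    (D : Fin m → Derivation 𝔽 F F)
    (hDcomm : ∀ μ ν (f : F), D μ (D ν f) = D ν (D μ f))
    (pa : A → Derivation 𝔽 F F)
    (hpacomm : ∀ a b (f : F), pa a (pa b f) = pa b (pa a f))
    (hpafin : ∀ f : F, {a : A | pa a f ≠ 0}.Finite)
    (Γ : A → Fin m → A → F)
    (hΓfin : ∀ b : A, {p : Fin m × A | Γ b p.1 p.2 ≠ 0}.Finite)
    (hΓ : ∀ (μ : Fin m) (a : A) (f : F),
      D μ (pa a f) - pa a (D μ f) = ∑ᶠ b, Γ b μ a * pa b f)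
    (jc : A → (Fin m → ℕ) → A' → F)
    (hjfin : ∀ a : A, {p : (Fin m → ℕ) × A' | jc a p.1 p.2 ≠ 0}.Finite)
    (hnj : ∀ (φ : A' → F) (a : A) (μ : Fin m), nabla D Γ (jmap D jc φ) a μ = 0)
    (hevj : ∀ ψ : A → F, (∀ (a : A) (μ : Fin m), nabla D Γ ψ a μ = 0) →
      ∀ (a : A) (i : Fin m → ℕ) (α : A'), ev pa ψ (jc a i α) = 0)
    (Λc : A' → A' → (Fin m → ℕ) → F)
    (hΛfin : ∀ α : A',
      {p : (Fin m → ℕ) × A' | Λc α p.2 p.1 ≠ 0 ∨ Λc p.2 α p.1 ≠ 0}.Finite)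
    (hskew : ∀ f : A' → F, {α : A' | f α ≠ 0}.Finite →
      ∀ α : A', LamStar D Λc f α = -Lam D Λc f α)
    (K L M : F) :
    IsDiv D
      ((pair (vard D pa jc K)
            (Lam D Λc (vard D pa jc (pair (vard D pa jc L) (Lam D Λc (vard D pa jc M)))))
        + pair (vard D pa jc L)
            (Lam D Λc (vard D pa jc (pair (vard D pa jc M) (Lam D Λc (vard D pa jc K)))))
        + pair (vard D pa jc M)
            (Lam D Λc (vard D pa jc (pair (vard D pa jc K) (Lam D Λc (vard D pa jc L))))))
      - (pair (vard D pa jc K)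
            (evLam D pa Λc (hamv D pa jc Λc L) (vard D pa jc M))
        + pair (vard D pa jc L)
            (evLam D pa Λc (hamv D pa jc Λc M) (vard D pa jc K))
        + pair (vard D pa jc M)
            (evLam D pa Λc (hamv D pa jc Λc K) (vard D pa jc L)))) := by
  have hInEK : ∀ (a : A) (μ : Fin m), nabla D Γ (hamv D pa jc Λc K) a μ = 0 :=
    fun a μ => hnj (Lam D Λc (vard D pa jc K)) a μ
  have hInEL : ∀ (a : A) (μ : Fin m), nabla D Γ (hamv D pa jc Λc L) a μ = 0 :=
    fun a μ => hnj (Lam D Λc (vard D pa jc L)) a μ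
  have hInEM : ∀ (a : A) (μ : Fin m), nabla D Γ (hamv D pa jc Λc M) a μ = 0 :=
    fun a μ => hnj (Lam D Λc (vard D pa jc M)) a μ
  have hev0K := hevj (hamv D pa jc Λc K) hInEK
  have hev0L := hevj (hamv D pa jc Λc L) hInEL
  have hev0M := hevj (hamv D pa jc Λc M) hInEM
  have hA1 := bracket_ev D pa jc Λc hDcomm hpafin hjfin hΛfin hskew K (pair (vard D pa jc L) (Lam D Λc (vard D pa jc M)))
  have hA2 := bracket_ev D pa jc Λc hDcomm hpafin hjfin hΛfin hskew L (pair (vard D pa jc M) (Lam D Λc (vard D pa jc K)))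
  have hA3 := bracket_ev D pa jc Λc hDcomm hpafin hjfin hΛfin hskew M (pair (vard D pa jc K) (Lam D Λc (vard D pa jc L)))
  have hB1 := ev_pair_Lam D pa Γ Λc hpafin hΓfin hΓ hΛfin (hamv D pa jc Λc K) hInEK
    (hf := vard_mem D pa jc hpafin hjfin L) (g := vard D pa jc M)
  have hB2 := ev_pair_Lam D pa Γ Λc hpafin hΓfin hΓ hΛfin (hamv D pa jc Λc L) hInEL
    (hf := vard_mem D pa jc hpafin hjfin M) (g := vard D pa jc K)
  have hB3 := ev_pair_Lam D pa Γ Λc hpafin hΓfin hΓ hΛfin (hamv D pa jc Λc M) hInEM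
    (hf := vard_mem D pa jc hpafin hjfin K) (g := vard D pa jc L)
  have hD1 := comm_pair_symm D pa Γ jc Λc hDcomm hpafin hΓfin hΓ hjfin hΛfin hskew
    (hamv D pa jc Λc K) hInEK L M
  have hD2 := comm_pair_symm D pa Γ jc Λc hDcomm hpafin hΓfin hΓ hjfin hΛfin hskew
    (hamv D pa jc Λc L) hInEL M K
  have hD3 := comm_pair_symm D pa Γ jc Λc hDcomm hpafin hΓfin hΓ hjfin hΛfin hskew
    (hamv D pa jc Λc M) hInEM K L
  have hC1 := lam_pair_symm D Λc hΛfin hDcomm hskew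
    (f := fun α => ev pa (hamv D pa jc Λc K) (vard D pa jc M α))
    (hf := fun α hα => vard_mem D pa jc hpafin hjfin M α (by
      intro h0
      exact hα (show ev pa (hamv D pa jc Λc K) (vard D pa jc M α) = 0 by
        rw [h0]; exact ev_zero pa _)))
    (g := vard D pa jc L)
  have hC2 := lam_pair_symm D Λc hΛfin hDcomm hskew
    (f := fun α => ev pa (hamv D pa jc Λc L) (vard D pa jc K α))
    (hf := fun α hα => vard_mem D pa jc hpafin hjfin K α (by
      intro h0
      exact hα (show ev pa (hamv D pa jc Λc L) (vard D pa jc K α) = 0 by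
        rw [h0]; exact ev_zero pa _)))
    (g := vard D pa jc M)
  have hC3 := lam_pair_symm D Λc hΛfin hDcomm hskew
    (f := fun α => ev pa (hamv D pa jc Λc M) (vard D pa jc L α))
    (hf := fun α hα => vard_mem D pa jc hpafin hjfin L α (by
      intro h0
      exact hα (show ev pa (hamv D pa jc Λc M) (vard D pa jc L α) = 0 by
        rw [h0]; exact ev_zero pa _)))
    (g := vard D pa jc K)
  have hE1 := pair_ev_vard D pa Γ jc Λc hDcomm hpacomm hpafin hΓfin hΓ hjfin
    (hamv D pa jc Λc K) hInEK hev0K L M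
  have hE2 := pair_ev_vard D pa Γ jc Λc hDcomm hpacomm hpafin hΓfin hΓ hjfin
    (hamv D pa jc Λc K) hInEK hev0K M L
  have hE3 := pair_ev_vard D pa Γ jc Λc hDcomm hpacomm hpafin hΓfin hΓ hjfin
    (hamv D pa jc Λc L) hInEL hev0L M K
  have hE4 := pair_ev_vard D pa Γ jc Λc hDcomm hpacomm hpafin hΓfin hΓ hjfin
    (hamv D pa jc Λc L) hInEL hev0L K M
  have hE5 := pair_ev_vard D pa Γ jc Λc hDcomm hpacomm hpafin hΓfin hΓ hjfin
    (hamv D pa jc Λc M) hInEM hev0M K L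
  have hE6 := pair_ev_vard D pa Γ jc Λc hDcomm hpacomm hpafin hΓfin hΓ hjfin
    (hamv D pa jc Λc M) hInEM hev0M L K
  have hS1 := Smat_symm pa hpacomm hpafin L (hamv D pa jc Λc K) (hamv D pa jc Λc M)
  have hS2 := Smat_symm pa hpacomm hpafin M (hamv D pa jc Λc K) (hamv D pa jc Λc L)
  have hS3 := Smat_symm pa hpacomm hpafin K (hamv D pa jc Λc L) (hamv D pa jc Λc M)
  have hkey : (pair (vard D pa jc K)
            (Lam D Λc (vard D pa jc (pair (vard D pa jc L) (Lam D Λc (vard D pa jc M)))))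
        + pair (vard D pa jc L)
            (Lam D Λc (vard D pa jc (pair (vard D pa jc M) (Lam D Λc (vard D pa jc K)))))
        + pair (vard D pa jc M)
            (Lam D Λc (vard D pa jc (pair (vard D pa jc K) (Lam D Λc (vard D pa jc L))))))
      - (pair (vard D pa jc K)
            (evLam D pa Λc (hamv D pa jc Λc L) (vard D pa jc M))
        + pair (vard D pa jc L)
            (evLam D pa Λc (hamv D pa jc Λc M) (vard D pa jc K))
        + pair (vard D pa jc M)
            (evLam D pa Λc (hamv D pa jc Λc K) (vard D pa jc L)))
      = (pair (vard D pa jc K) (Lam D Λc (vard D pa jc (pair (vard D pa jc L) (Lam D Λc (vard D pa jc M))))) + ev pa (hamv D pa jc Λc K) (pair (vard D pa jc L) (Lam D Λc (vard D pa jc M)))) + (pair (vard D pa jc L) (Lam D Λc (vard D pa jc (pair (vard D pa jc M) (Lam D Λc (vard D pa jc K))))) + ev pa (hamv D pa jc Λc L) (pair (vard D pa jc M) (Lam D Λc (vard D pa jc K)))) + (pair (vard D pa jc M) (Lam D Λc (vard D pa jc (pair (vard D pa jc K) (Lam D Λc (vard D pa jc L))))) + ev pa (hamv D pa jc Λc M)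 (pair (vard D pa jc K) (Lam D Λc (vard D pa jc L)))) - (pair (vard D pa jc L) (evLam D pa Λc (hamv D pa jc Λc K) (vard D pa jc M)) + pair (vard D pa jc M) (evLam D pa Λc (hamv D pa jc Λc K) (vard D pa jc L))) - (pair (vard D pa jc M) (evLam D pa Λc (hamv D pa jc Λc L) (vard D pa jc K)) + pair (vard D pa jc K) (evLam D pa Λc (hamv D pa jc Λc L) (vard D pa jc M))) - (pair (vard D pa jc K) (evLam D pa Λc (hamv D pa jc Λc M) (vard D pa jc L)) + pair (vard D pa jc L) (evLam D pa Λc (hamv D pa jc Λc M) (vard D pa jc K))) - (pair (fun α => ev pa (hamv D pa jc Λc K) (vard D pa jc M α)) (Lam D Λc (vard D pa jc L)) + pair (vard D pa jc L) (Lam D Λc (fun α => ev pa (hamv D pa jc Λc K) (vard D pa jc M α)))) - (pair (fun α => ev pa (hamv D pa jc Λc L) (vard D pa jc K α)) (Lam D Λc (vard D pa jc M)) + pair (vard D pa jc M) (Lam D Λc (fun α => ev pa (hamv D pa jc Λc L) (vard D pa jc K α)))) - (pair (fun α => ev pa (hamv D pa jc Λc M) (vard D pa jc L α)) (Lam D Λc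 (vard D pa jc K)) + pair (vard D pa jc K) (Lam D Λc (fun α => ev pa (hamv D pa jc Λc M) (vard D pa jc L α)))) - (pair (fun α => ev pa (hamv D pa jc Λc K) (vard D pa jc L α)) (Lam D Λc (vard D pa jc M)) - Smat pa L (hamv D pa jc Λc K) (hamv D pa jc Λc M)) + (pair (fun α => ev pa (hamv D pa jc Λc K) (vard D pa jc M α)) (Lam D Λc (vard D pa jc L)) - Smat pa M (hamv D pa jc Λc K) (hamv D pa jc Λc L)) - (pair (fun α => ev pa (hamv D pa jc Λc L) (vard D pa jc M α)) (Lam D Λc (vard D pa jc K)) - Smat pa M (hamv D pa jc Λc L) (hamv D pa jc Λc K)) + (pair (fun α => ev pa (hamv D pa jc Λc L) (vard D pa jc K α)) (Lam D Λc (vard D pa jc M)) - Smat pa K (hamv D pa jc Λc L) (hamv D pa jc Λc M)) - (pair (fun α => ev pa (hamv D pa jc Λc M) (vard D pa jc K α)) (Lam D Λc (vard D pa jc L)) - Smat pa K (hamv D pa jc Λc M) (hamv D pa jc Λc L)) + (pair (fun α => ev pa (hamv D pa jc Λc M) (vard D pa jc L α)) (Lam D Λc (vard D pa jc K)) - Smat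 pa L (hamv D pa jc Λc M) (hamv D pa jc Λc K)) := by
    rw [hB1, hB2, hB3, hS1, hS2, hS3]
    ring
  rw [hkey]
  exact (((((((((((((hA1.add hA2).add hA3).sub hD1).sub hD2).sub hD3).sub
    hC1).sub hC2).sub hC3).sub hE1).add hE2).sub hE3).add hE4).sub hE5).add hE6
end
end

section
/- (Hamiltonian criterion.) Assume ∇ ∘ j = 0, ev_ψ(j^a_{iα}) = 0 for every ψ ∈ Ē := ker ∇ and all a, i, α, Λ is skew-adjoint (Λ* = −Λ), and additionally ev_ψ(Λ^{αβ}_i) = 0 for every ψ ∈ Ē and all α, β, i. For R ∈ F set δR = j*(∂R) and {K,L} := ⟨δK, Λ(δL)⟩. Then the Jacobi identity holds modulo divergences: for all K, L, M ∈ F, ⟨δK, Λ(δ{L,M})⟩ + ⟨δL, Λ(δ{M,K})⟩ + ⟨δM, Λ(δ{K,L})⟩ ∈ Div F^M; i.e. the bracket {∫K, ∫L} = ∫{K,L} on F/Div F^M satisfies the Jacobi identity. -/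
noncomputable section

variable {𝔽 : Type*} [Field 𝔽] {F : Type*} [CommRing F] [Algebra 𝔽 F] {m : ℕ}
  {A A' : Type*}

namespace Helper

attribute [local instance] Classical.propDecidable

variable (D : Fin m → Derivation 𝔽 F F)

/-- generic finsum to Finset.sum -/
theorem finsum_eq_sum' {ι : Type*} (f : ι → F) (s : Finset ι)
    (h : ∀ i, f i ≠ 0 → i ∈ s) : ∑ᶠ i, f i = ∑ i ∈ s, f i :=
  finsum_eq_sum_of_support_subset f (by intro i hi; exact h i hi)

theorem finsum_finsum_eq_sum {ι κ : Type*} (h : ι → κ → F) (s : Finset ι) (t : Finset κ)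
    (hs : ∀ i j, h i j ≠ 0 → i ∈ s) (ht : ∀ i j, h i j ≠ 0 → j ∈ t) :
    ∑ᶠ i, ∑ᶠ j, h i j = ∑ i ∈ s, ∑ j ∈ t, h i j := by
  have hin : ∀ i, ∑ᶠ j, h i j = ∑ j ∈ t, h i j := fun i =>
    finsum_eq_sum' _ _ (fun j hj => ht i j hj)
  rw [finsum_eq_sum' (fun i => ∑ᶠ j, h i j) s]
  · exact Finset.sum_congr rfl fun i _ => hin i
  · intro i hi
    rw [hin i] at hi
    obtain ⟨j, _, hj⟩ := Finset.exists_ne_zero_of_sum_ne_zero hi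
    exact hs i j hj

def DpowL (l : List (Fin m)) (i : Fin m → ℕ) : F → F :=
  l.foldr (fun μ g => (⇑(D μ))^[i μ] ∘ g) id

theorem dpow_eq_dpowL (i : Fin m → ℕ) : Dpow D i = DpowL D (List.finRange m) i := rfl

theorem dpowL_nil (i : Fin m → ℕ) : DpowL D ([] : List (Fin m)) i = id := rfl

theorem dpowL_cons (μ : Fin m) (l : List (Fin m)) (i : Fin m → ℕ) :
    DpowL D (μ :: l) i = (⇑(D μ))^[i μ] ∘ DpowL D l i := rfl

theorem iter_add (d : Derivation 𝔽 F F) (n : ℕ) (x y : F) :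
    (⇑d)^[n] (x + y) = (⇑d)^[n] x + (⇑d)^[n] y := by
  induction n generalizing x y with
  | zero => simp
  | succ n ih => simp only [Function.iterate_succ_apply, map_add, ih]

theorem iter_zero (d : Derivation 𝔽 F F) (n : ℕ) : (⇑d)^[n] (0 : F) = 0 := by
  induction n with
  | zero => simp
  | succ n ih => simp only [Function.iterate_succ_apply, map_zero, ih]

theorem dpowL_add (l : List (Fin m)) (i : Fin m → ℕ) (x y : F) :
    DpowL D l i (x + y) = DpowL D l i x + DpowL D l i y := by
  induction l generalizing x y with
  | nil => rfl
  | cons μ t ih => simp only [dpowL_cons, Function.comp_apply, ih, iter_add]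

theorem dpowL_zero (l : List (Fin m)) (i : Fin m → ℕ) : DpowL D l i (0 : F) = 0 := by
  induction l with
  | nil => rfl
  | cons μ t ih => simp only [dpowL_cons, Function.comp_apply, ih, iter_zero]

theorem dpow_add (i : Fin m → ℕ) (x y : F) :
    Dpow D i (x + y) = Dpow D i x + Dpow D i y := dpowL_add D _ i x y

theorem dpow_zero (i : Fin m → ℕ) : Dpow D i (0 : F) = 0 := dpowL_zero D _ i


section Comm

/-- a function commuting with all `D ν` commutes with `DpowL`. -/
theorem commute_dpowL (g : F → F) (hg : ∀ ν (f : F), g (D ν f) = D ν (g f))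
    (l : List (Fin m)) (i : Fin m → ℕ) (f : F) :
    g (DpowL D l i f) = DpowL D l i (g f) := by
  induction l generalizing f with
  | nil => rfl
  | cons μ t ih =>
    simp only [dpowL_cons, Function.comp_apply]
    have hiter : ∀ n x, g ((⇑(D μ))^[n] x) = (⇑(D μ))^[n] (g x) := by
      intro n
      induction n with
      | zero => intro x; rfl
      | succ n ihn =>
        intro x
        rw [Function.iterate_succ_apply', Function.iterate_succ_apply', hg, ihn]
    rw [hiter, ih]

theorem dpowL_D_comm (hDcomm : ∀ μ ν (f : F), D μ (D ν f) = D ν (D μ f)) (μ : Fin m) (l : List (Fin m)) (i : Fin m → ℕ) (f : F) :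
    DpowL D l i (D μ f) = D μ (DpowL D l i f) :=
  (commute_dpowL D (⇑(D μ)) (fun ν x => hDcomm μ ν x) l i f).symm

theorem dpowL_congr (l : List (Fin m)) (i j : Fin m → ℕ)
    (h : ∀ ν ∈ l, i ν = j ν) (f : F) : DpowL D l i f = DpowL D l j f := by
  induction l generalizing f with
  | nil => rfl
  | cons μ t ih =>
    simp only [dpowL_cons, Function.comp_apply]
    rw [h μ (List.mem_cons_self)]
    congr 1
    exact ih (fun ν hν => h ν (List.mem_cons_of_mem μ hν)) f

theorem dpowL_update (hDcomm : ∀ μ ν (f : F), D μ (D ν f) = D ν (D μ f)) (μ : Fin m) (l : List (Fin m)) (hnd : l.Nodup) (hμ : μ ∈ l)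
    (i : Fin m → ℕ) (f : F) :
    DpowL D l (Function.update i μ (i μ + 1)) f = D μ (DpowL D l i f) := by
  induction l generalizing f with
  | nil => simp at hμ
  | cons ν t ih =>
    rcases List.nodup_cons.mp hnd with ⟨hνt, hndt⟩
    by_cases hveq : ν = μ
    · subst hveq
      have hmt : ν ∉ t := hνt
      simp only [dpowL_cons, Function.comp_apply, Function.update_self]
      rw [dpowL_congr D t (Function.update i ν (i ν + 1)) i
        (fun ρ hρ => Function.update_of_ne (by rintro rfl; exact hmt hρ) _ _) f]
      rw [Function.iterate_succ_apply']
    · have hμt : μ ∈ t := by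
        rcases List.mem_cons.mp hμ with h | h
        · exact absurd h.symm hveq
        · exact h
      simp only [dpowL_cons, Function.comp_apply]
      rw [Function.update_of_ne (Ne.symm (fun h => hveq h.symm)) _ _]
      rw [ih hndt hμt]
      have : ∀ n x, (⇑(D ν))^[n] (D μ x) = D μ ((⇑(D ν))^[n] x) := by
        intro n
        induction n with
        | zero => intro x; rfl
        | succ n ihn =>
          intro x
          rw [Function.iterate_succ_apply', Function.iterate_succ_apply', ihn,
            hDcomm ν μ]
      rw [this]

theorem dpowL_id (l : List (Fin m)) (i : Fin m → ℕ) (h : ∀ ν ∈ l, i ν = 0) (f : F) :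
    DpowL D l i f = f := by
  induction l generalizing f with
  | nil => rfl
  | cons μ t ih =>
    simp only [dpowL_cons, Function.comp_apply, h μ (List.mem_cons_self),
      Function.iterate_zero, id]
    exact ih (fun ν hν => h ν (List.mem_cons_of_mem μ hν)) f

theorem dpow_of_msize_zero (i : Fin m → ℕ) (h : msize i = 0) (f : F) :
    Dpow D i f = f := by
  have : ∀ ν : Fin m, i ν = 0 := by
    intro ν
    exact Finset.sum_eq_zero_iff.mp h ν (Finset.mem_univ ν)
  exact dpowL_id D _ i (fun ν _ => this ν) f

theorem dpow_update' (hDcomm : ∀ μ ν (f : F), D μ (D ν f) = D ν (D μ f)) (μ : Fin m) (i : Fin m → ℕ) (hμ : i μ ≠ 0) (f : F) :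
    Dpow D i f = D μ (Dpow D (Function.update i μ (i μ - 1)) f) := by
  have h1 : Function.update (Function.update i μ (i μ - 1)) μ
      (Function.update i μ (i μ - 1) μ + 1) = i := by
    funext ν
    by_cases hν : ν = μ
    · subst hν
      simp only [Function.update_self, Function.update_idem]
      omega
    · simp [Function.update_of_ne hν]
  conv_lhs => rw [← h1]
  exact dpowL_update D hDcomm μ (List.finRange m) (List.nodup_finRange m)
    (List.mem_finRange μ) _ f

theorem dpow_D_comm (hDcomm : ∀ μ ν (f : F), D μ (D ν f) = D ν (D μ f)) (μ : Fin m) (i : Fin m → ℕ) (f : F) :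
    Dpow D i (D μ f) = D μ (Dpow D i f) :=
  dpowL_D_comm D hDcomm μ _ i f

theorem msize_update (μ : Fin m) (i : Fin m → ℕ) (hμ : i μ ≠ 0) :
    msize (Function.update i μ (i μ - 1)) + 1 = msize i := by
  unfold msize
  rw [Finset.sum_update_of_mem (Finset.mem_univ μ)]
  have h2 : ∑ ν : Fin m, i ν = i μ + ∑ x ∈ Finset.univ \ {μ}, i x := by
    have h3 := Finset.sum_update_of_mem (Finset.mem_univ μ) i (i μ)
    rwa [Function.update_eq_self] at h3
  omega

end Comm

theorem isDiv_zero : IsDiv D (0 : F) := ⟨0, by simp⟩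

theorem isDiv_add {x y : F} (hx : IsDiv D x) (hy : IsDiv D y) : IsDiv D (x + y) := by
  obtain ⟨ψ, hψ⟩ := hx
  obtain ⟨χ, hχ⟩ := hy
  exact ⟨ψ + χ, by simp [hψ, hχ, Finset.sum_add_distrib]⟩

theorem isDiv_neg {x : F} (hx : IsDiv D x) : IsDiv D (-x) := by
  obtain ⟨ψ, hψ⟩ := hx
  exact ⟨-ψ, by simp [hψ, Finset.sum_neg_distrib]⟩

theorem isDiv_sub {x y : F} (hx : IsDiv D x) (hy : IsDiv D y) : IsDiv D (x - y) := by
  rw [sub_eq_add_neg]; exact isDiv_add D hx (isDiv_neg D hy)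

theorem isDiv_congr {x y : F} (h : x = y) (hx : IsDiv D x) : IsDiv D y := h ▸ hx

theorem isDiv_D (μ : Fin m) (f : F) : IsDiv D (D μ f) := by
  refine ⟨Pi.single μ f, ?_⟩
  rw [Finset.sum_eq_single μ]
  · simp
  · intro ν _ hν; simp [Pi.single_eq_of_ne hν]
  · intro h; exact absurd (Finset.mem_univ μ) h

theorem isDiv_sum {ι : Type*} (s : Finset ι) (h : ι → F)
    (hd : ∀ x ∈ s, IsDiv D (h x)) : IsDiv D (∑ x ∈ s, h x) := by
  classical
  induction s using Finset.induction_on with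
  | empty => simpa using isDiv_zero D
  | @insert a s hx ih =>
    rw [Finset.sum_insert hx]
    exact isDiv_add D (hd a (Finset.mem_insert_self a s))
      (ih fun x hxs => hd x (Finset.mem_insert_of_mem hxs))

/-- integration by parts core -/
theorem ibp (hDcomm : ∀ μ ν (f : F), D μ (D ν f) = D ν (D μ f)) (i : Fin m → ℕ)
    (f g : F) : IsDiv D (g * Dpow D i f - (-1 : F) ^ msize i * Dpow D i g * f) := by
  generalize hn : msize i = n
  induction n generalizing i f g with
  | zero =>
    rw [dpow_of_msize_zero D i hn f, dpow_of_msize_zero D i hn g]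
    exact isDiv_congr D (by ring) (isDiv_zero D)
  | succ n ih =>
    have : ∃ μ, i μ ≠ 0 := by
      by_contra h
      push_neg at h
      have : msize i = 0 := Finset.sum_eq_zero fun μ _ => h μ
      omega
    obtain ⟨μ, hμ⟩ := this
    set i' := Function.update i μ (i μ - 1) with hi'
    have hmsz : msize i' = n := by have h5 := msize_update μ i hμ; rw [← hi'] at h5; omega
    -- T1 : g * D μ x + D μ g * x is a divergence, with x := Dpow D i' f
    have T1 : IsDiv D (g * D μ (Dpow D i' f) + D μ g * Dpow D i' f) := by
      have : g * D μ (Dpow D i' f) + D μ g * Dpow D i' f = D μ (g * Dpow D i' f) := by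
        rw [Derivation.leibniz]
        simp [smul_eq_mul]
        ring
      exact isDiv_congr D this.symm (isDiv_D D μ _)
    have T2 := ih i' f (D μ g) hmsz
    have hD1 : Dpow D i f = D μ (Dpow D i' f) := dpow_update' D hDcomm μ i hμ f
    have hD2 : Dpow D i' (D μ g) = Dpow D i g := by
      rw [dpow_D_comm D hDcomm μ i' g, ← dpow_update' D hDcomm μ i hμ g]
    rw [hD2] at T2
    have := isDiv_sub D T1 T2
    refine isDiv_congr D ?_ this
    rw [hD1]
    ring

theorem der_mul (d : Derivation 𝔽 F F) (x y : F) : d (x * y) = x * d y + y * d x := by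
  rw [Derivation.leibniz]; simp [smul_eq_mul]

theorem der_neg_one_pow (d : Derivation 𝔽 F F) (k : ℕ) : d ((-1 : F) ^ k) = 0 := by
  induction k with
  | zero => simpa using d.map_one_eq_zero
  | succ k ih =>
    rw [pow_succ, der_mul, ih]
    have : d (-1 : F) = 0 := by
      have := d.map_one_eq_zero
      rw [show (-1 : F) = -(1 : F) by ring, map_neg, this, neg_zero]
    rw [this]; ring

variable (pa : A → Derivation 𝔽 F F)


theorem ev_eq_sum (ψ : A → F) (f : F) (s : Finset A) (h : ∀ a, pa a f ≠ 0 → a ∈ s) :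
    ev pa ψ f = ∑ a ∈ s, ψ a * pa a f := by
  refine finsum_eq_sum' _ s fun a ha => h a fun h0 => ha ?_
  rw [h0, mul_zero]

theorem ev_zero (ψ : A → F) : ev pa ψ (0 : F) = 0 := by
  unfold ev
  simp

theorem ev_of_eq_zero (ψ : A → F) {f : F} (hf : f = 0) : ev pa ψ f = 0 := by
  rw [hf]; exact ev_zero pa ψ

theorem ev_add (hpafin : ∀ f : F, {a : A | pa a f ≠ 0}.Finite) (ψ : A → F) (x y : F) :
    ev pa ψ (x + y) = ev pa ψ x + ev pa ψ y := by
  classical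
  set s := (hpafin x).toFinset ∪ (hpafin y).toFinset with hs
  have hx : ∀ a, pa a x ≠ 0 → a ∈ s := fun a ha => by
    simp [hs, Set.Finite.mem_toFinset]; tauto
  have hy : ∀ a, pa a y ≠ 0 → a ∈ s := fun a ha => by
    simp [hs, Set.Finite.mem_toFinset]; tauto
  have hxy : ∀ a, pa a (x + y) ≠ 0 → a ∈ s := by
    intro a ha
    by_contra hc
    have h1 : pa a x = 0 := by_contra fun h => hc (hx a h)
    have h2 : pa a y = 0 := by_contra fun h => hc (hy a h)
    exact ha (by rw [map_add, h1, h2, add_zero])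
  rw [ev_eq_sum pa ψ (x + y) s hxy, ev_eq_sum pa ψ x s hx, ev_eq_sum pa ψ y s hy,
    ← Finset.sum_add_distrib]
  exact Finset.sum_congr rfl fun a _ => by rw [map_add]; ring

theorem ev_mul (hpafin : ∀ f : F, {a : A | pa a f ≠ 0}.Finite) (ψ : A → F) (x y : F) :
    ev pa ψ (x * y) = x * ev pa ψ y + y * ev pa ψ x := by
  classical
  set s := (hpafin x).toFinset ∪ (hpafin y).toFinset with hs
  have hx : ∀ a, pa a x ≠ 0 → a ∈ s := fun a ha => by
    simp [hs, Set.Finite.mem_toFinset]; tauto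
  have hy : ∀ a, pa a y ≠ 0 → a ∈ s := fun a ha => by
    simp [hs, Set.Finite.mem_toFinset]; tauto
  have hxy : ∀ a, pa a (x * y) ≠ 0 → a ∈ s := by
    intro a ha
    by_contra hc
    have h1 : pa a x = 0 := by_contra fun h => hc (hx a h)
    have h2 : pa a y = 0 := by_contra fun h => hc (hy a h)
    exact ha (by rw [der_mul, h1, h2]; ring)
  rw [ev_eq_sum pa ψ (x * y) s hxy, ev_eq_sum pa ψ x s hx, ev_eq_sum pa ψ y s hy,
    Finset.mul_sum, Finset.mul_sum, ← Finset.sum_add_distrib]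
  exact Finset.sum_congr rfl fun a _ => by rw [der_mul]; ring

theorem ev_finset_sum {ι : Type*} (hpafin : ∀ f : F, {a : A | pa a f ≠ 0}.Finite) (ψ : A → F) (s : Finset ι) (h : ι → F) :
    ev pa ψ (∑ x ∈ s, h x) = ∑ x ∈ s, ev pa ψ (h x) := by
  classical
  induction s using Finset.induction_on with
  | empty => simpa using ev_zero pa ψ
  | @insert a s hx ih =>
    rw [Finset.sum_insert hx, Finset.sum_insert hx, ev_add pa hpafin, ih]

theorem ev_neg_one_pow_mul (hpafin : ∀ f : F, {a : A | pa a f ≠ 0}.Finite) (ψ : A → F) (k : ℕ) (x : F) :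
    ev pa ψ ((-1 : F) ^ k * x) = (-1 : F) ^ k * ev pa ψ x := by
  rw [ev_mul pa hpafin]
  have : ev pa ψ ((-1 : F) ^ k) = 0 := by
    rw [ev_eq_sum pa ψ _ (∅ : Finset A) (fun a ha => absurd (der_neg_one_pow (pa a) k) ha)]
    simp
  rw [this]; ring

/-- key: `ev_ψ` commutes with `D μ` when `∇ψ = 0` -/
theorem ev_D_comm (hpafin : ∀ f : F, {a : A | pa a f ≠ 0}.Finite) (D : Fin m → Derivation 𝔽 F F) (Γ : A → Fin m → A → F)
    (hΓfin : ∀ b : A, {p : Fin m × A | Γ b p.1 p.2 ≠ 0}.Finite)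
    (hΓ : ∀ (μ : Fin m) (a : A) (f : F),
      D μ (pa a f) - pa a (D μ f) = ∑ᶠ b, Γ b μ a * pa b f)
    (ψ : A → F) (hψ : ∀ (a : A) (μ : Fin m), nabla D Γ ψ a μ = 0)
    (μ : Fin m) (f : F) : ev pa ψ (D μ f) = D μ (ev pa ψ f) := by
  classical
  set u : Finset A := (hpafin f).toFinset ∪ (hpafin (D μ f)).toFinset with hu
  have hΓb : ∀ b : A, {a : A | Γ b μ a ≠ 0}.Finite := by
    intro b
    refine Set.Finite.subset ((hΓfin b).image Prod.snd) ?_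
    intro a ha
    exact ⟨(μ, a), ha, rfl⟩
  set u' : Finset A := u ∪ u.biUnion (fun b => (hΓb b).toFinset) with hu'
  have huu' : u ⊆ u' := Finset.subset_union_left
  have hfu : ∀ a, pa a f ≠ 0 → a ∈ u' := fun a ha =>
    huu' (Finset.mem_union_left _ ((hpafin f).mem_toFinset.mpr ha))
  have hDfu : ∀ a, pa a (D μ f) ≠ 0 → a ∈ u' := fun a ha =>
    huu' (Finset.mem_union_right _ ((hpafin (D μ f)).mem_toFinset.mpr ha))
  -- (1) commutator expansion with a Finset sum
  have expand : ∀ a : A,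
      D μ (pa a f) = pa a (D μ f) + ∑ b ∈ u', Γ b μ a * pa b f := by
    intro a
    have h1 := hΓ μ a f
    have h2 : ∑ᶠ b, Γ b μ a * pa b f = ∑ b ∈ u', Γ b μ a * pa b f := by
      refine finsum_eq_sum' _ u' fun b hb => hfu b fun h0 => hb ?_
      rw [h0, mul_zero]
    rw [h2] at h1
    linear_combination h1
  have e1 : ev pa ψ f = ∑ a ∈ u', ψ a * pa a f := ev_eq_sum pa ψ f u' hfu
  have e2 : ev pa ψ (D μ f) = ∑ a ∈ u', ψ a * pa a (D μ f) := ev_eq_sum pa ψ _ u' hDfu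
  rw [e1, e2, map_sum]
  have e3 : ∀ a ∈ u', D μ (ψ a * pa a f)
      = ψ a * pa a (D μ f) + (D μ (ψ a) * pa a f
        + ψ a * ∑ b ∈ u', Γ b μ a * pa b f) := by
    intro a _
    rw [der_mul, expand a]
    ring
  rw [Finset.sum_congr rfl e3, Finset.sum_add_distrib, Finset.sum_add_distrib]
  have e5 : ∑ a ∈ u', ψ a * ∑ b ∈ u', Γ b μ a * pa b f
      = ∑ b ∈ u', (∑ a ∈ u', Γ b μ a * ψ a) * pa b f := by
    have : ∀ a ∈ u', ψ a * ∑ b ∈ u', Γ b μ a * pa b f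
        = ∑ b ∈ u', ψ a * (Γ b μ a * pa b f) := fun a _ => Finset.mul_sum _ _ _
    rw [Finset.sum_congr rfl this, Finset.sum_comm]
    refine Finset.sum_congr rfl fun b _ => ?_
    rw [Finset.sum_mul]
    exact Finset.sum_congr rfl fun a _ => by ring
  have e6 : ∀ b ∈ u', (∑ a ∈ u', Γ b μ a * ψ a) * pa b f = -(D μ (ψ b)) * pa b f := by
    intro b _
    by_cases hb : pa b f = 0
    · rw [hb]; ring
    · have hbu : b ∈ u := Finset.mem_union_left _ ((hpafin f).mem_toFinset.mpr hb)
      have hsub : ∀ a, Γ b μ a * ψ a ≠ 0 → a ∈ u' := by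
        intro a ha
        have : Γ b μ a ≠ 0 := fun h0 => ha (by rw [h0, zero_mul])
        exact Finset.mem_union_right _
          (Finset.mem_biUnion.mpr ⟨b, hbu, (hΓb b).mem_toFinset.mpr this⟩)
      have hfs : ∑ᶠ a, Γ b μ a * ψ a = ∑ a ∈ u', Γ b μ a * ψ a :=
        finsum_eq_sum' _ u' hsub
      have hn := hψ b μ
      unfold nabla at hn
      rw [hfs] at hn
      have : ∑ a ∈ u', Γ b μ a * ψ a = -(D μ (ψ b)) := by linear_combination hn
      rw [this]
  rw [e5, Finset.sum_congr rfl e6]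
  have : ∑ a ∈ u', D μ (ψ a) * pa a f + ∑ b ∈ u', -(D μ (ψ b)) * pa b f = 0 := by
    rw [← Finset.sum_add_distrib]
    exact Finset.sum_eq_zero fun a _ => by ring
  linear_combination -this

section Ops

theorem finsum_exists_ne_zero {M : Type*} [AddCommMonoid M] {ι : Type*} {h : ι → M}
    (hne : ∑ᶠ i, h i ≠ 0) : ∃ i, h i ≠ 0 := by
  by_contra hc
  push_neg at hc
  exact hne (by rw [finsum_congr fun i => hc i, finsum_zero])

theorem pair_comm' (f g : A → F) : pair f g = pair g f :=
  finsum_congr fun a => mul_comm _ _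

theorem pair_eq_sum (f g : A → F) (s : Finset A) (h : ∀ a, f a ≠ 0 → a ∈ s) :
    pair f g = ∑ a ∈ s, f a * g a :=
  finsum_eq_sum' _ s fun a ha => h a fun h0 => ha (by rw [h0, zero_mul])

theorem pair_neg_left (f g : A → F) : pair (fun a => -f a) g = -pair f g := by
  unfold pair
  rw [← finsum_neg_distrib]
  exact finsum_congr fun a => by ring

theorem term_ne (i : Fin m → ℕ) (c : F) (h : (-1 : F) ^ msize i * Dpow D i c ≠ 0) :
    c ≠ 0 := fun h0 => h (by rw [h0, dpow_zero, mul_zero])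

section Jpart

theorem jstar_mem (jc : A → (Fin m → ℕ) → A' → F)
    (hjfin : ∀ a : A, {p : (Fin m → ℕ) × A' | jc a p.1 p.2 ≠ 0}.Finite)
    (f : A → F) (hf : {a : A | f a ≠ 0}.Finite) : ∀ α, jstar D jc f α ≠ 0 →
    α ∈ hf.toFinset.biUnion fun a => ((hjfin a).image Prod.snd).toFinset := by
  intro α hα
  obtain ⟨a, ha⟩ := finsum_exists_ne_zero hα
  obtain ⟨i, hi⟩ := finsum_exists_ne_zero ha
  have hc := term_ne D i _ hi
  have hfa : f a ≠ 0 := right_ne_zero_of_mul hc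
  have hj : jc a i α ≠ 0 := left_ne_zero_of_mul hc
  exact Finset.mem_biUnion.mpr ⟨a, hf.mem_toFinset.mpr hfa,
    (Set.Finite.mem_toFinset _).mpr ⟨(i, α), hj, rfl⟩⟩

theorem jstar_fin (jc : A → (Fin m → ℕ) → A' → F)
    (hjfin : ∀ a : A, {p : (Fin m → ℕ) × A' | jc a p.1 p.2 ≠ 0}.Finite)
    (f : A → F) (hf : {a : A | f a ≠ 0}.Finite) : {α | jstar D jc f α ≠ 0}.Finite :=
  Set.Finite.subset (hf.toFinset.biUnion fun a =>
    ((hjfin a).image Prod.snd).toFinset).finite_toSet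
    (fun α hα => jstar_mem D jc hjfin f hf α hα)

theorem ibpj (hDcomm : ∀ μ ν (f : F), D μ (D ν f) = D ν (D μ f))
    (jc : A → (Fin m → ℕ) → A' → F)
    (hjfin : ∀ a : A, {p : (Fin m → ℕ) × A' | jc a p.1 p.2 ≠ 0}.Finite)
    (f : A → F) (hf : {a : A | f a ≠ 0}.Finite) (g : A' → F) :
    IsDiv D (pair (jstar D jc f) g - pair f (jmap D jc g)) := by
  classical
  set sa : Finset A := hf.toFinset with hsa
  set si : Finset (Fin m → ℕ) :=
    sa.biUnion fun a => ((hjfin a).image Prod.fst).toFinset with hsi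
  set sα : Finset A' := sa.biUnion fun a => ((hjfin a).image Prod.snd).toFinset with hsα
  have hmem : ∀ a i α, f a ≠ 0 → jc a i α ≠ 0 → a ∈ sa ∧ i ∈ si ∧ α ∈ sα := by
    intro a i α hfa hj
    have ha : a ∈ sa := hf.mem_toFinset.mpr hfa
    exact ⟨ha, Finset.mem_biUnion.mpr ⟨a, ha, (Set.Finite.mem_toFinset _).mpr ⟨(i, α), hj, rfl⟩⟩,
      Finset.mem_biUnion.mpr ⟨a, ha, (Set.Finite.mem_toFinset _).mpr ⟨(i, α), hj, rfl⟩⟩⟩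
  have jstar_sum : ∀ α, jstar D jc f α
      = ∑ a ∈ sa, ∑ i ∈ si, (-1 : F) ^ msize i * Dpow D i (jc a i α * f a) := by
    intro α
    refine finsum_finsum_eq_sum _ sa si ?_ ?_
    · intro a i hne
      have hc := term_ne D i _ hne
      exact (hmem a i α (right_ne_zero_of_mul hc) (left_ne_zero_of_mul hc)).1
    · intro a i hne
      have hc := term_ne D i _ hne
      exact (hmem a i α (right_ne_zero_of_mul hc) (left_ne_zero_of_mul hc)).2.1
  have e1 : pair (jstar D jc f) g
      = ∑ α ∈ sα, ∑ a ∈ sa, ∑ i ∈ si,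
          (-1 : F) ^ msize i * Dpow D i (jc a i α * f a) * g α := by
    rw [pair_eq_sum _ g sα (jstar_mem D jc hjfin f hf)]
    refine Finset.sum_congr rfl fun α _ => ?_
    rw [jstar_sum α, Finset.sum_mul]
    exact Finset.sum_congr rfl fun a _ => Finset.sum_mul _ _ _
  have e2 : pair f (jmap D jc g)
      = ∑ a ∈ sa, ∑ i ∈ si, ∑ α ∈ sα, f a * (jc a i α * Dpow D i (g α)) := by
    rw [pair_eq_sum f _ sa fun a ha => hf.mem_toFinset.mpr ha]
    refine Finset.sum_congr rfl fun a ha => ?_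
    by_cases hfa : f a = 0
    · rw [hfa]
      simp
    have hjm : jmap D jc g a = ∑ i ∈ si, ∑ α ∈ sα, jc a i α * Dpow D i (g α) := by
      refine finsum_finsum_eq_sum _ si sα ?_ ?_
      · intro i α hne
        exact (hmem a i α hfa (left_ne_zero_of_mul hne)).2.1
      · intro i α hne
        exact (hmem a i α hfa (left_ne_zero_of_mul hne)).2.2
    rw [hjm, Finset.mul_sum]
    exact Finset.sum_congr rfl fun i _ => Finset.mul_sum _ _ _
  have e1' : pair (jstar D jc f) g
      = ∑ a ∈ sa, ∑ i ∈ si, ∑ α ∈ sα,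
          (-1 : F) ^ msize i * Dpow D i (jc a i α * f a) * g α := by
    rw [e1, Finset.sum_comm]
    exact Finset.sum_congr rfl fun a _ => Finset.sum_comm
  rw [e1', e2, ← Finset.sum_sub_distrib]
  refine isDiv_sum D _ _ fun a _ => ?_
  rw [← Finset.sum_sub_distrib]
  refine isDiv_sum D _ _ fun i _ => ?_
  rw [← Finset.sum_sub_distrib]
  refine isDiv_sum D _ _ fun α _ => ?_
  have h0 := ibp D hDcomm i (g α) (jc a i α * f a)
  exact isDiv_congr D (by ring) (isDiv_neg D h0)

end Jpart

section Lpart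

theorem ibpl (hDcomm : ∀ μ ν (f : F), D μ (D ν f) = D ν (D μ f))
    (Λc : A' → A' → (Fin m → ℕ) → F)
    (hΛfin : ∀ α : A',
      {p : (Fin m → ℕ) × A' | Λc α p.2 p.1 ≠ 0 ∨ Λc p.2 α p.1 ≠ 0}.Finite)
    (f : A' → F) (hf : {α : A' | f α ≠ 0}.Finite) (g : A' → F) :
    IsDiv D (pair f (Lam D Λc g) - pair (LamStar D Λc f) g) := by
  classical
  set sβ : Finset A' := hf.toFinset with hsβ
  set si : Finset (Fin m → ℕ) :=
    sβ.biUnion fun β => ((hΛfin β).image Prod.fst).toFinset with hsi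
  set sα : Finset A' := sβ.biUnion fun β => ((hΛfin β).image Prod.snd).toFinset with hsα
  have hmem1 : ∀ β i α, f β ≠ 0 → Λc β α i ≠ 0 → i ∈ si ∧ α ∈ sα := by
    intro β i α hfβ hl
    have hβ : β ∈ sβ := hf.mem_toFinset.mpr hfβ
    refine ⟨Finset.mem_biUnion.mpr ⟨β, hβ, (Set.Finite.mem_toFinset _).mpr
      ⟨(i, α), Or.inl hl, rfl⟩⟩, Finset.mem_biUnion.mpr ⟨β, hβ,
      (Set.Finite.mem_toFinset _).mpr ⟨(i, α), Or.inl hl, rfl⟩⟩⟩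
  have e1 : pair f (Lam D Λc g)
      = ∑ β ∈ sβ, ∑ i ∈ si, ∑ α ∈ sα, f β * (Λc β α i * Dpow D i (g α)) := by
    rw [pair_eq_sum f _ sβ fun β hβ => hf.mem_toFinset.mpr hβ]
    refine Finset.sum_congr rfl fun β hβ => ?_
    by_cases hfβ : f β = 0
    · rw [hfβ]
      simp
    have hlam : Lam D Λc g β = ∑ α ∈ sα, ∑ i ∈ si, Λc β α i * Dpow D i (g α) := by
      refine finsum_finsum_eq_sum _ sα si ?_ ?_
      · intro α i hne
        exact (hmem1 β i α hfβ (left_ne_zero_of_mul hne)).2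
      · intro α i hne
        exact (hmem1 β i α hfβ (left_ne_zero_of_mul hne)).1
    rw [hlam, Finset.mul_sum, Finset.sum_comm]
    exact Finset.sum_congr rfl fun i _ => Finset.mul_sum _ _ _
  have lamstar_sum : ∀ α, LamStar D Λc f α
      = ∑ β ∈ sβ, ∑ i ∈ si, (-1 : F) ^ msize i * Dpow D i (Λc β α i * f β) := by
    intro α
    refine finsum_finsum_eq_sum _ sβ si ?_ ?_
    · intro β i hne
      have hc := term_ne D i _ hne
      exact hf.mem_toFinset.mpr (right_ne_zero_of_mul hc)
    · intro β i hne
      have hc := term_ne D i _ hne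
      exact (hmem1 β i α (right_ne_zero_of_mul hc) (left_ne_zero_of_mul hc)).1
  have hstarmem : ∀ α, LamStar D Λc f α ≠ 0 → α ∈ sα := by
    intro α hα
    obtain ⟨β, hβ⟩ := finsum_exists_ne_zero hα
    obtain ⟨i, hi⟩ := finsum_exists_ne_zero hβ
    have hc := term_ne D i _ hi
    exact (hmem1 β i α (right_ne_zero_of_mul hc) (left_ne_zero_of_mul hc)).2
  have e2 : pair (LamStar D Λc f) g
      = ∑ β ∈ sβ, ∑ i ∈ si, ∑ α ∈ sα,
          (-1 : F) ^ msize i * Dpow D i (Λc β α i * f β) * g α := by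
    rw [pair_eq_sum _ g sα hstarmem]
    have : ∀ α ∈ sα, LamStar D Λc f α * g α
        = ∑ β ∈ sβ, ∑ i ∈ si, (-1 : F) ^ msize i * Dpow D i (Λc β α i * f β) * g α := by
      intro α _
      rw [lamstar_sum α, Finset.sum_mul]
      exact Finset.sum_congr rfl fun β _ => Finset.sum_mul _ _ _
    rw [Finset.sum_congr rfl this, Finset.sum_comm]
    exact Finset.sum_congr rfl fun β _ => Finset.sum_comm
  rw [e1, e2, ← Finset.sum_sub_distrib]
  refine isDiv_sum D _ _ fun β _ => ?_
  rw [← Finset.sum_sub_distrib]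
  refine isDiv_sum D _ _ fun i _ => ?_
  rw [← Finset.sum_sub_distrib]
  refine isDiv_sum D _ _ fun α _ => ?_
  have h0 := ibp D hDcomm i (g α) (Λc β α i * f β)
  exact isDiv_congr D (by ring) h0

theorem skew_pair (hDcomm : ∀ μ ν (f : F), D μ (D ν f) = D ν (D μ f))
    (Λc : A' → A' → (Fin m → ℕ) → F)
    (hΛfin : ∀ α : A',
      {p : (Fin m → ℕ) × A' | Λc α p.2 p.1 ≠ 0 ∨ Λc p.2 α p.1 ≠ 0}.Finite)
    (f : A' → F) (hf : {α : A' | f α ≠ 0}.Finite)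
    (hskew : ∀ f : A' → F, {α : A' | f α ≠ 0}.Finite →
      ∀ α : A', LamStar D Λc f α = -Lam D Λc f α) (g : A' → F) :
    IsDiv D (pair f (Lam D Λc g) + pair (Lam D Λc f) g) := by
  have h1 := ibpl D hDcomm Λc hΛfin f hf g
  have h2 : pair (LamStar D Λc f) g = -pair (Lam D Λc f) g := by
    have : LamStar D Λc f = fun α => -Lam D Λc f α := funext fun α => hskew f hf α
    rw [this, pair_neg_left]
  rw [h2] at h1
  exact isDiv_congr D (by ring) h1

end Lpart
end Ops

section EvOps

theorem ev_dpow (pa : A → Derivation 𝔽 F F) (ψ : A → F)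
    (hψD : ∀ (μ : Fin m) (f : F), ev pa ψ (D μ f) = D μ (ev pa ψ f))
    (i : Fin m → ℕ) (f : F) :
    ev pa ψ (Dpow D i f) = Dpow D i (ev pa ψ f) :=
  commute_dpowL D (ev pa ψ) (fun ν x => hψD ν x) (List.finRange m) i f

theorem ev_pair (pa : A → Derivation 𝔽 F F)
    (hpafin : ∀ f : F, {a : A | pa a f ≠ 0}.Finite) (ψ : A → F)
    (f g : A' → F) (hf : {α : A' | f α ≠ 0}.Finite) :
    ev pa ψ (pair f g)
      = pair (fun α => ev pa ψ (f α)) g + pair f (fun α => ev pa ψ (g α)) := by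
  set s := hf.toFinset with hs
  have h1 : pair f g = ∑ α ∈ s, f α * g α :=
    pair_eq_sum f g s fun α hα => hf.mem_toFinset.mpr hα
  rw [h1, ev_finset_sum pa hpafin]
  have h2 : ∀ α ∈ s, ev pa ψ (f α * g α)
      = f α * ev pa ψ (g α) + g α * ev pa ψ (f α) := fun α _ => ev_mul pa hpafin ψ _ _
  rw [Finset.sum_congr rfl h2, Finset.sum_add_distrib,
    pair_eq_sum (fun α => ev pa ψ (f α)) g s
      (fun α hα => hf.mem_toFinset.mpr fun h0 => hα (ev_of_eq_zero pa ψ h0)),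
    pair_eq_sum f (fun α => ev pa ψ (g α)) s fun α hα => hf.mem_toFinset.mpr hα]
  rw [add_comm]
  congr 1
  exact Finset.sum_congr rfl fun α _ => mul_comm _ _

theorem ev_lam (pa : A → Derivation 𝔽 F F)
    (hpafin : ∀ f : F, {a : A | pa a f ≠ 0}.Finite) (ψ : A → F)
    (hψD : ∀ (μ : Fin m) (f : F), ev pa ψ (D μ f) = D μ (ev pa ψ f))
    (Λc : A' → A' → (Fin m → ℕ) → F)
    (hΛfin : ∀ α : A',
      {p : (Fin m → ℕ) × A' | Λc α p.2 p.1 ≠ 0 ∨ Λc p.2 α p.1 ≠ 0}.Finite)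
    (hev0 : ∀ (α β : A') (i : Fin m → ℕ), ev pa ψ (Λc α β i) = 0)
    (f : A' → F) (hf : {α : A' | f α ≠ 0}.Finite) (α : A') :
    ev pa ψ (Lam D Λc f α) = Lam D Λc (fun β => ev pa ψ (f β)) α := by
  set sβ := hf.toFinset with hsβ
  set si := sβ.biUnion fun β => ((hΛfin β).image Prod.fst).toFinset with hsi
  have hlam : ∀ h : A' → F, (∀ β, h β ≠ 0 → f β ≠ 0) →
      Lam D Λc h α = ∑ β ∈ sβ, ∑ i ∈ si, Λc α β i * Dpow D i (h β) := by
    intro h hh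
    refine finsum_finsum_eq_sum _ sβ si ?_ ?_
    · intro β i hne
      have h2 : h β ≠ 0 := fun h0 => hne (by rw [h0, dpow_zero, mul_zero])
      exact hf.mem_toFinset.mpr (hh β h2)
    · intro β i hne
      have h1 : Λc α β i ≠ 0 := left_ne_zero_of_mul hne
      have h2 : h β ≠ 0 := fun h0 => hne (by rw [h0, dpow_zero, mul_zero])
      exact Finset.mem_biUnion.mpr ⟨β, hf.mem_toFinset.mpr (hh β h2),
        (Set.Finite.mem_toFinset _).mpr ⟨(i, α), Or.inr h1, rfl⟩⟩
  rw [hlam f fun β hβ => hβ, ev_finset_sum pa hpafin,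
    hlam (fun β => ev pa ψ (f β)) fun β hβ => fun h0 => hβ (ev_of_eq_zero pa ψ h0)]
  refine Finset.sum_congr rfl fun β _ => ?_
  rw [ev_finset_sum pa hpafin]
  refine Finset.sum_congr rfl fun i _ => ?_
  rw [ev_mul pa hpafin, hev0, ev_dpow D pa ψ hψD]
  ring

theorem ev_jstar (pa : A → Derivation 𝔽 F F)
    (hpafin : ∀ f : F, {a : A | pa a f ≠ 0}.Finite) (ψ : A → F)
    (hψD : ∀ (μ : Fin m) (f : F), ev pa ψ (D μ f) = D μ (ev pa ψ f))
    (jc : A → (Fin m → ℕ) → A' → F)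
    (hjfin : ∀ a : A, {p : (Fin m → ℕ) × A' | jc a p.1 p.2 ≠ 0}.Finite)
    (hev0 : ∀ (a : A) (i : Fin m → ℕ) (α : A'), ev pa ψ (jc a i α) = 0)
    (f : A → F) (hf : {a : A | f a ≠ 0}.Finite) (α : A') :
    ev pa ψ (jstar D jc f α) = jstar D jc (fun a => ev pa ψ (f a)) α := by
  set sa := hf.toFinset with hsa
  set si := sa.biUnion fun a => ((hjfin a).image Prod.fst).toFinset with hsi
  have hsum : ∀ h : A → F, (∀ a, h a ≠ 0 → f a ≠ 0) →
      jstar D jc h α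
        = ∑ a ∈ sa, ∑ i ∈ si, (-1 : F) ^ msize i * Dpow D i (jc a i α * h a) := by
    intro h hh
    refine finsum_finsum_eq_sum _ sa si ?_ ?_
    · intro a i hne
      have hc := term_ne D i _ hne
      exact hf.mem_toFinset.mpr (hh a (right_ne_zero_of_mul hc))
    · intro a i hne
      have hc := term_ne D i _ hne
      exact Finset.mem_biUnion.mpr
        ⟨a, hf.mem_toFinset.mpr (hh a (right_ne_zero_of_mul hc)),
          (Set.Finite.mem_toFinset _).mpr ⟨(i, α), left_ne_zero_of_mul hc, rfl⟩⟩
  rw [hsum f fun a ha => ha, ev_finset_sum pa hpafin,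
    hsum (fun a => ev pa ψ (f a)) fun a ha => fun h0 => ha (ev_of_eq_zero pa ψ h0)]
  refine Finset.sum_congr rfl fun a _ => ?_
  rw [ev_finset_sum pa hpafin]
  refine Finset.sum_congr rfl fun i _ => ?_
  rw [ev_neg_one_pow_mul pa hpafin, ev_dpow D pa ψ hψD, ev_mul pa hpafin, hev0]
  ring

theorem ssym (pa : A → Derivation 𝔽 F F)
    (hpafin : ∀ f : F, {a : A | pa a f ≠ 0}.Finite)
    (hpacomm : ∀ a b (f : F), pa a (pa b f) = pa b (pa a f))
    (x y : A → F) (R : F) :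
    pair (fun a => ev pa x (pa a R)) y = pair (fun a => ev pa y (pa a R)) x := by
  set s : Finset A := (hpafin R).toFinset ∪
    (hpafin R).toFinset.biUnion (fun a => (hpafin (pa a R)).toFinset) with hsdef
  have hmem : ∀ a, pa a R ≠ 0 → a ∈ s := fun a ha =>
    Finset.mem_union_left _ ((hpafin R).mem_toFinset.mpr ha)
  have hmem2 : ∀ a b, pa b (pa a R) ≠ 0 → b ∈ s := by
    intro a b hb
    have ha : pa a R ≠ 0 := fun h0 => hb (by rw [h0, map_zero])
    exact Finset.mem_union_right _ (Finset.mem_biUnion.mpr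
      ⟨a, (hpafin R).mem_toFinset.mpr ha, (hpafin (pa a R)).mem_toFinset.mpr hb⟩)
  have expand : ∀ u v : A → F,
      pair (fun a => ev pa u (pa a R)) v
        = ∑ a ∈ s, ∑ b ∈ s, u b * pa b (pa a R) * v a := by
    intro u v
    rw [pair_eq_sum _ v s fun a ha => hmem a fun h0 => ha (ev_of_eq_zero pa u h0)]
    refine Finset.sum_congr rfl fun a _ => ?_
    rw [ev_eq_sum pa u (pa a R) s fun b hb => hmem2 a b hb, Finset.sum_mul]
  rw [expand x y, expand y x, Finset.sum_comm]
  refine Finset.sum_congr rfl fun a _ => Finset.sum_congr rfl fun b _ => ?_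
  rw [hpacomm b a]
  ring

end EvOps

section Main

theorem key
    (hDcomm : ∀ μ ν (f : F), D μ (D ν f) = D ν (D μ f))
    (pa : A → Derivation 𝔽 F F)
    (hpafin : ∀ f : F, {a : A | pa a f ≠ 0}.Finite)
    (Γ : A → Fin m → A → F)
    (hΓfin : ∀ b : A, {p : Fin m × A | Γ b p.1 p.2 ≠ 0}.Finite)
    (hΓ : ∀ (μ : Fin m) (a : A) (f : F),
      D μ (pa a f) - pa a (D μ f) = ∑ᶠ b, Γ b μ a * pa b f)
    (jc : A → (Fin m → ℕ) → A' → F)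
    (hjfin : ∀ a : A, {p : (Fin m → ℕ) × A' | jc a p.1 p.2 ≠ 0}.Finite)
    (hnj : ∀ (φ : A' → F) (a : A) (μ : Fin m), nabla D Γ (jmap D jc φ) a μ = 0)
    (hevj : ∀ ψ : A → F, (∀ (a : A) (μ : Fin m), nabla D Γ ψ a μ = 0) →
      ∀ (a : A) (i : Fin m → ℕ) (α : A'), ev pa ψ (jc a i α) = 0)
    (Λc : A' → A' → (Fin m → ℕ) → F)
    (hΛfin : ∀ α : A',
      {p : (Fin m → ℕ) × A' | Λc α p.2 p.1 ≠ 0 ∨ Λc p.2 α p.1 ≠ 0}.Finite)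
    (hskew : ∀ f : A' → F, {α : A' | f α ≠ 0}.Finite →
      ∀ α : A', LamStar D Λc f α = -Lam D Λc f α)
    (hevΛ : ∀ ψ : A → F, (∀ (a : A) (μ : Fin m), nabla D Γ ψ a μ = 0) →
      ∀ (α β : A') (i : Fin m → ℕ), ev pa ψ (Λc α β i) = 0)
    (X Y Z : F) :
    IsDiv D
      (pair (vard D pa jc X)
          (Lam D Λc (vard D pa jc (pair (vard D pa jc Y) (Lam D Λc (vard D pa jc Z)))))
        - (pair (fun a => ev pa (jmap D jc (Lam D Λc (vard D pa jc X))) (pa a Z))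
              (jmap D jc (Lam D Λc (vard D pa jc Y)))
          - pair (fun a => ev pa (jmap D jc (Lam D Λc (vard D pa jc X))) (pa a Y))
              (jmap D jc (Lam D Λc (vard D pa jc Z))))) := by
  set ψX := jmap D jc (Lam D Λc (vard D pa jc X)) with hψX
  have hKX : ∀ (a : A) (μ : Fin m), nabla D Γ ψX a μ = 0 :=
    fun a μ => hnj (Lam D Λc (vard D pa jc X)) a μ
  have hψD : ∀ (μ : Fin m) (f : F), ev pa ψX (D μ f) = D μ (ev pa ψX f) :=
    fun μ f => ev_D_comm pa hpafin D Γ hΓfin hΓ ψX hKX μ f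
  have hδfin : ∀ W : F, {α : A' | vard D pa jc W α ≠ 0}.Finite := fun W =>
    jstar_fin D jc hjfin (fun a => pa a W) (hpafin W)
  set N := pair (vard D pa jc Y) (Lam D Λc (vard D pa jc Z)) with hN
  -- divergences
  have d1 : IsDiv D (pair (vard D pa jc X) (Lam D Λc (vard D pa jc N))
      + pair (Lam D Λc (vard D pa jc X)) (vard D pa jc N)) :=
    skew_pair D hDcomm Λc hΛfin (vard D pa jc X) (hδfin X) hskew (vard D pa jc N)
  have d2 : IsDiv D (pair (vard D pa jc N) (Lam D Λc (vard D pa jc X))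
      - pair (fun a => pa a N) ψX) :=
    ibpj D hDcomm jc hjfin (fun a => pa a N) (hpafin N) (Lam D Λc (vard D pa jc X))
  have eq1 : pair (Lam D Λc (vard D pa jc X)) (vard D pa jc N)
      = pair (vard D pa jc N) (Lam D Λc (vard D pa jc X)) := pair_comm' _ _
  have eq2 : pair (fun a => pa a N) ψX = ev pa ψX N := by
    rw [pair_comm']
    rfl
  have eq3 : ev pa ψX N
      = pair (fun α => ev pa ψX (vard D pa jc Y α)) (Lam D Λc (vard D pa jc Z))
        + pair (vard D pa jc Y) (fun α => ev pa ψX (Lam D Λc (vard D pa jc Z) α)) :=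
    ev_pair pa hpafin ψX (vard D pa jc Y) (Lam D Λc (vard D pa jc Z)) (hδfin Y)
  have eq4 : (fun α => ev pa ψX (Lam D Λc (vard D pa jc Z) α))
      = Lam D Λc (fun β => ev pa ψX (vard D pa jc Z β)) := funext fun α =>
    ev_lam D pa hpafin ψX hψD Λc hΛfin (hevΛ ψX hKX) (vard D pa jc Z) (hδfin Z) α
  have eq5 : (fun α => ev pa ψX (vard D pa jc Y α))
      = jstar D jc (fun a => ev pa ψX (pa a Y)) := funext fun α =>
    ev_jstar D pa hpafin ψX hψD jc hjfin (hevj ψX hKX) (fun a => pa a Y) (hpafin Y) α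
  have eq6 : (fun β => ev pa ψX (vard D pa jc Z β))
      = jstar D jc (fun a => ev pa ψX (pa a Z)) := funext fun α =>
    ev_jstar D pa hpafin ψX hψD jc hjfin (hevj ψX hKX) (fun a => pa a Z) (hpafin Z) α
  have hfinY : {a : A | ev pa ψX (pa a Y) ≠ 0}.Finite :=
    (hpafin Y).subset fun a ha => fun h0 => ha (ev_of_eq_zero pa ψX h0)
  have hfinZ : {a : A | ev pa ψX (pa a Z) ≠ 0}.Finite :=
    (hpafin Z).subset fun a ha => fun h0 => ha (ev_of_eq_zero pa ψX h0)
  have d3 : IsDiv D (pair (jstar D jc (fun a => ev pa ψX (pa a Y)))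
        (Lam D Λc (vard D pa jc Z))
      - pair (fun a => ev pa ψX (pa a Y)) (jmap D jc (Lam D Λc (vard D pa jc Z)))) :=
    ibpj D hDcomm jc hjfin (fun a => ev pa ψX (pa a Y)) hfinY
      (Lam D Λc (vard D pa jc Z))
  have d4 : IsDiv D (pair (vard D pa jc Y)
        (Lam D Λc (fun β => ev pa ψX (vard D pa jc Z β)))
      + pair (Lam D Λc (vard D pa jc Y)) (fun β => ev pa ψX (vard D pa jc Z β))) :=
    skew_pair D hDcomm Λc hΛfin (vard D pa jc Y) (hδfin Y) hskew
      (fun β => ev pa ψX (vard D pa jc Z β))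
  have eq7 : pair (Lam D Λc (vard D pa jc Y)) (fun β => ev pa ψX (vard D pa jc Z β))
      = pair (fun β => ev pa ψX (vard D pa jc Z β)) (Lam D Λc (vard D pa jc Y)) :=
    pair_comm' _ _
  have d5 : IsDiv D (pair (jstar D jc (fun a => ev pa ψX (pa a Z)))
        (Lam D Λc (vard D pa jc Y))
      - pair (fun a => ev pa ψX (pa a Z)) (jmap D jc (Lam D Λc (vard D pa jc Y)))) :=
    ibpj D hDcomm jc hjfin (fun a => ev pa ψX (pa a Z)) hfinZ
      (Lam D Λc (vard D pa jc Y))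
  -- rewrite to common atoms
  rw [eq1] at d1
  rw [eq6] at d4
  rw [eq6] at eq7
  rw [eq7] at d4
  rw [← eq5] at d3
  have eqN : pair (fun a => pa a N) ψX
      = pair (fun α => ev pa ψX (vard D pa jc Y α)) (Lam D Λc (vard D pa jc Z))
        + pair (vard D pa jc Y)
            (Lam D Λc (jstar D jc (fun a => ev pa ψX (pa a Z)))) := by
    rw [eq2, eq3, eq4, eq6]
  have big := isDiv_add D (isDiv_sub D (isDiv_sub D (isDiv_sub D d1 d2) d3) d4) d5
  refine isDiv_congr D ?_ big
  linear_combination eqN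
end Main

end Helper

/-- Hamiltonian criterion: if moreover `ev_ψ(Λ^{αβ}_i) = 0` for
all `ψ ∈ Ē`, then the Jacobi identity holds modulo divergences:
`⟨δK, Λ(δ{L,M})⟩ + ⟨δL, Λ(δ{M,K})⟩ + ⟨δM, Λ(δ{K,L})⟩ ∈ Div F^M`. -/
theorem stmt_14
    {𝔽 : Type*} [Field 𝔽] [CharZero 𝔽] {F : Type*} [CommRing F] [Algebra 𝔽 F]
    {m : ℕ} {A A' : Type*}
    (D : Fin m → Derivation 𝔽 F F)
    (hDcomm : ∀ μ ν (f : F), D μ (D ν f) = D ν (D μ f))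
    (pa : A → Derivation 𝔽 F F)
    (hpacomm : ∀ a b (f : F), pa a (pa b f) = pa b (pa a f))
    (hpafin : ∀ f : F, {a : A | pa a f ≠ 0}.Finite)
    (Γ : A → Fin m → A → F)
    (hΓfin : ∀ b : A, {p : Fin m × A | Γ b p.1 p.2 ≠ 0}.Finite)
    (hΓ : ∀ (μ : Fin m) (a : A) (f : F),
      D μ (pa a f) - pa a (D μ f) = ∑ᶠ b, Γ b μ a * pa b f)
    (jc : A → (Fin m → ℕ) → A' → F)
    (hjfin : ∀ a : A, {p : (Fin m → ℕ) × A' | jc a p.1 p.2 ≠ 0}.Finite)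
    (hnj : ∀ (φ : A' → F) (a : A) (μ : Fin m), nabla D Γ (jmap D jc φ) a μ = 0)
    (hevj : ∀ ψ : A → F, (∀ (a : A) (μ : Fin m), nabla D Γ ψ a μ = 0) →
      ∀ (a : A) (i : Fin m → ℕ) (α : A'), ev pa ψ (jc a i α) = 0)
    (Λc : A' → A' → (Fin m → ℕ) → F)
    (hΛfin : ∀ α : A',
      {p : (Fin m → ℕ) × A' | Λc α p.2 p.1 ≠ 0 ∨ Λc p.2 α p.1 ≠ 0}.Finite)
    (hskew : ∀ f : A' → F, {α : A' | f α ≠ 0}.Finite →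
      ∀ α : A', LamStar D Λc f α = -Lam D Λc f α)
    (hevΛ : ∀ ψ : A → F, (∀ (a : A) (μ : Fin m), nabla D Γ ψ a μ = 0) →
      ∀ (α β : A') (i : Fin m → ℕ), ev pa ψ (Λc α β i) = 0)
    (K L M : F) :
    IsDiv D
      (pair (vard D pa jc K)
          (Lam D Λc (vard D pa jc (pair (vard D pa jc L) (Lam D Λc (vard D pa jc M)))))
        + pair (vard D pa jc L)
          (Lam D Λc (vard D pa jc (pair (vard D pa jc M) (Lam D Λc (vard D pa jc K)))))
        + pair (vard D pa jc M)
          (Lam D Λc (vard D pa jc (pair (vard D pa jc K) (Lam D Λc (vard D pa jc L)))))) := by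
  have k1 := Helper.key D hDcomm pa hpafin Γ hΓfin hΓ jc hjfin hnj hevj Λc hΛfin
    hskew hevΛ K L M
  have k2 := Helper.key D hDcomm pa hpafin Γ hΓfin hΓ jc hjfin hnj hevj Λc hΛfin
    hskew hevΛ L M K
  have k3 := Helper.key D hDcomm pa hpafin Γ hΓfin hΓ jc hjfin hnj hevj Λc hΛfin
    hskew hevΛ M K L
  have e1 := Helper.ssym pa hpafin hpacomm
    (jmap D jc (Lam D Λc (vard D pa jc K))) (jmap D jc (Lam D Λc (vard D pa jc L))) M
  have e2 := Helper.ssym pa hpafin hpacomm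
    (jmap D jc (Lam D Λc (vard D pa jc K))) (jmap D jc (Lam D Λc (vard D pa jc M))) L
  have e3 := Helper.ssym pa hpafin hpacomm
    (jmap D jc (Lam D Λc (vard D pa jc L))) (jmap D jc (Lam D Λc (vard D pa jc M))) K
  have big := Helper.isDiv_add D (Helper.isDiv_add D k1 k2) k3
  exact Helper.isDiv_congr D (by linear_combination -e1 + e2 - e3) big
end
end
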